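/- arXiv:1709.09738 — 4 statements merged into one kernel-verified Lean document; each statement's English description precedes it below -/
import Mathlib

section
/- Let B, C ⊆ ℝ^d be convex bodies of equal volume V > 0 such that vol(t₁·C + t₂·B) ≤ c^d (t₁ + t₂)^d V for all t₁, t₂ > 0, where c ≥ 1. Then there exists a finite set Y ⊆ ℤ^d with |Y| ≤ (3c)^d such that C ∩ ℤ^d ⊆ Y + (B ∩ ℤ^d). -/
open MeasureTheory
open scoped Pointwise ENNReal

/-- The integer lattice points in `ℝ^d`. -/
def intLattice (d : ℕ) : Set (EuclideanSpace ℝ (Fin d)) :=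
  {x | ∀ i, ∃ n : ℤ, x i = n}

lemma intLattice_sub {d : ℕ} {x y : EuclideanSpace ℝ (Fin d)}
    (hx : x ∈ intLattice d) (hy : y ∈ intLattice d) : x - y ∈ intLattice d := by
  intro i
  obtain ⟨n, hn⟩ := hx i
  obtain ⟨m, hm⟩ := hy i
  exact ⟨n - m, by simp [PiLp.sub_apply, hn, hm]⟩

lemma finite_inter_intLattice {d : ℕ} {C : Set (EuclideanSpace ℝ (Fin d))}
    (hC : IsCompact C) : (C ∩ intLattice d).Finite := by
  obtain ⟨R, hR⟩ := hC.isBounded.subset_closedBall 0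
  have key : C ∩ intLattice d ⊆
      (fun n : Fin d → ℤ => (WithLp.toLp 2 (fun i => (n i : ℝ)) : EuclideanSpace ℝ (Fin d))) ''
        (Set.univ.pi fun _ : Fin d => Set.Icc (-⌈R⌉) ⌈R⌉) := by
    rintro x ⟨hxC, hxL⟩
    choose n hn using hxL
    refine ⟨n, fun i _ => ?_, PiLp.ext fun i => (hn i).symm⟩
    have h1 : |x i| ≤ ‖x‖ := by
      rw [EuclideanSpace.norm_eq]
      rw [show |x i| = Real.sqrt (‖x i‖^2) by
        rw [Real.sqrt_sq_eq_abs, Real.norm_eq_abs, abs_abs]]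
      apply Real.sqrt_le_sqrt
      exact Finset.single_le_sum (f := fun j => ‖x j‖^2) (fun j _ => sq_nonneg _)
        (Finset.mem_univ i)
    have h2 : ‖x‖ ≤ R := by simpa [Metric.mem_closedBall] using hR hxC
    have h5 : |n i| ≤ ⌈R⌉ := by
      have : |((n i : ℤ) : ℝ)| ≤ ((⌈R⌉ : ℤ) : ℝ) := ((hn i ▸ h1).trans h2).trans (Int.le_ceil R)
      exact_mod_cast this
    exact ⟨(abs_le.mp h5).1, (abs_le.mp h5).2⟩
  exact Set.Finite.subset (Set.Finite.image _ (Set.Finite.pi fun _ => Set.finite_Icc _ _)) key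

theorem stmt_3 (d : ℕ) (B C : Set (EuclideanSpace ℝ (Fin d)))
    (hCcpt : IsCompact C) (hCconv : Convex ℝ C) (hCint : (interior C).Nonempty)
    (hBcpt : IsCompact B) (hBconv : Convex ℝ B) (hBint : (interior B).Nonempty)
    (hBsymm : B = -B)
    (V : ℝ≥0∞) (hV : 0 < V) (hCV : volume C = V) (hBV : volume B = V)
    (c : ℝ) (hc : 1 ≤ c)
    (hvol : ∀ t₁ t₂ : ℝ, 0 < t₁ → 0 < t₂ →
      volume (t₁ • C + t₂ • B) ≤ ENNReal.ofReal (c ^ d * (t₁ + t₂) ^ d) * V) :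
    ∃ Y : Set (EuclideanSpace ℝ (Fin d)), Y ⊆ intLattice d ∧ Y.Finite ∧
      (Y.ncard : ℝ) ≤ (3 * c) ^ d ∧
      C ∩ intLattice d ⊆ Y + (B ∩ intLattice d) := by
  have hF : (C ∩ intLattice d).Finite := finite_inter_intLattice hCcpt
  -- the separated family property
  set P : Set (EuclideanSpace ℝ (Fin d)) → Prop :=
    fun S => S ⊆ C ∩ intLattice d ∧ ∀ y ∈ S, ∀ y' ∈ S, y ≠ y' → y - y' ∉ B with hP
  -- a maximal such set
  have hTfin : {S | P S}.Finite := (hF.finite_subsets).subset (fun S hS => hS.1)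
  have hTne : (∅ : Set (EuclideanSpace ℝ (Fin d))) ∈ {S | P S} := by
    constructor
    · exact Set.empty_subset _
    · intro y hy; exact absurd hy (Set.notMem_empty y)
  obtain ⟨Y, hYP, hYmax⟩ : ∃ Y ∈ {S | P S}, ∀ Y' ∈ {S | P S}, id Y ≤ id Y' → id Y = id Y' := by
    obtain ⟨Y, hY, hm⟩ := Set.Finite.exists_maximalFor id _ hTfin ⟨∅, hTne⟩
    exact ⟨Y, hY, fun Y' h1 h2 => le_antisymm h2 (hm h1 h2)⟩
  have hYsub : Y ⊆ C ∩ intLattice d := hYP.1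
  have hYsep : ∀ y ∈ Y, ∀ y' ∈ Y, y ≠ y' → y - y' ∉ B := hYP.2
  have hYfin : Y.Finite := hF.subset hYsub
  have hYlat : Y ⊆ intLattice d := fun y hy => (hYsub hy).2
  have hzeroB : (0 : EuclideanSpace ℝ (Fin d)) ∈ B := by
    obtain ⟨b, hb⟩ := hBint
    have hbB : b ∈ B := interior_subset hb
    have hnbB : -b ∈ B := by rw [hBsymm]; simpa using hbB
    have h0 := hBconv (a := 1/2) (b := 1/2) hbB hnbB (by norm_num) (by norm_num) (by norm_num)
    simpa using h0
  -- covering property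
  have hcover : C ∩ intLattice d ⊆ Y + (B ∩ intLattice d) := by
    intro x hx
    by_cases hxY : x ∈ Y
    · exact ⟨x, hxY, 0, ⟨hzeroB, fun i => ⟨0, by simp⟩⟩, add_zero x⟩
    · -- insert x Y is not in the family
      have hni : ¬ P (insert x Y) := by
        intro hcon
        have := hYmax _ hcon (by simp [Set.subset_insert])
        simp only [id] at this
        exact hxY (this ▸ Set.mem_insert x Y)
      have hsub' : insert x Y ⊆ C ∩ intLattice d := Set.insert_subset hx hYsub
      have hnsep : ¬ ∀ y ∈ insert x Y, ∀ y' ∈ insert x Y, y ≠ y' → y - y' ∉ B :=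
        fun h => hni ⟨hsub', h⟩
      push_neg at hnsep
      obtain ⟨y, hy, y', hy', hne, hmem⟩ := hnsep
      -- one of y, y' is x
      have key : ∃ z ∈ Y, x - z ∈ B := by
        rcases Set.mem_insert_iff.mp hy with rfl | hyY
        · rcases Set.mem_insert_iff.mp hy' with rfl | h
          · exact absurd rfl hne
          · exact ⟨y', h, hmem⟩
        · rcases Set.mem_insert_iff.mp hy' with rfl | h
          · refine ⟨y, hyY, ?_⟩
            rw [hBsymm]
            simpa using hmem
          · exact absurd hmem (hYsep y hyY y' h hne)
      obtain ⟨z, hzY, hzB⟩ := key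
      exact ⟨z, hzY, x - z, ⟨hzB, intLattice_sub hx.2 (hYlat hzY)⟩, by show z + (x - z) = x; rw [add_comm]; exact sub_add_cancel x z⟩
  -- cardinality bound via volume argument
  have hVfin : V ≠ ⊤ := hCV ▸ hCcpt.measure_lt_top.ne
  have hcard : (Y.ncard : ℝ) ≤ (3 * c) ^ d := by
    classical
    set s := hYfin.toFinset with hs
    -- the translates y + 2⁻¹ • B
    set g : EuclideanSpace ℝ (Fin d) → Set (EuclideanSpace ℝ (Fin d)) :=
      fun y => y +ᵥ ((2:ℝ)⁻¹ • B) with hg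
    have hmeas : ∀ y, MeasurableSet (g y) := by
      intro y
      have : IsCompact (g y) := (hBcpt.smul ((2:ℝ)⁻¹)).vadd y
      exact this.isClosed.measurableSet
    have hdisj : (s : Set (EuclideanSpace ℝ (Fin d))).PairwiseDisjoint g := by
      intro y hy y' hy' hne
      simp only [hs, Set.Finite.coe_toFinset] at hy hy'
      rw [Function.onFun, Set.disjoint_left]
      rintro z hz hz'
      obtain ⟨b, hb, hb'⟩ := hz
      obtain ⟨b', hb2, hb2'⟩ := hz'
      obtain ⟨u, hu, hu'⟩ := hb
      obtain ⟨u', hu2, hu2'⟩ := hb2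
      apply hYsep y hy y' hy' hne
      have e1 : z = y + (2:ℝ)⁻¹ • u := by rw [← hb', ← hu']; rfl
      have e2 : z = y' + (2:ℝ)⁻¹ • u' := by rw [← hb2', ← hu2']; rfl
      have h12 : y + (2:ℝ)⁻¹ • u = (2:ℝ)⁻¹ • u' + y' := by
        rw [e1.symm.trans e2, add_comm]
      have h3 : y - y' = (2:ℝ)⁻¹ • u' - (2:ℝ)⁻¹ • u :=
        sub_eq_sub_iff_add_eq_add.mpr h12
      rw [h3, sub_eq_add_neg, ← smul_neg]
      have hnu : -u ∈ B := by rw [hBsymm]; simpa using hu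
      exact hBconv hu2 hnu (by norm_num) (by norm_num) (by norm_num)
    have hunion : (⋃ y ∈ s, g y) ⊆ (1:ℝ) • C + (2:ℝ)⁻¹ • B := by
      intro z hz
      simp only [Set.mem_iUnion] at hz
      obtain ⟨y, hy, hzg⟩ := hz
      have hyC : y ∈ C := (hYsub (by simpa [hs] using hy)).1
      obtain ⟨b, hb, hb'⟩ := hzg
      refine ⟨1 • y, Set.smul_mem_smul_set hyC, b, hb, ?_⟩
      rw [one_smul]
      exact hb'
    have hμg : ∀ y, volume (g y) = ENNReal.ofReal ((2:ℝ)⁻¹ ^ d) * V := by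
      intro y
      rw [hg]
      simp only [measure_vadd]
      rw [Measure.addHaar_smul, hBV, finrank_euclideanSpace_fin]
      congr 1
      rw [abs_of_nonneg (by positivity)]
    have hsum : (s.card : ℝ≥0∞) * (ENNReal.ofReal ((2:ℝ)⁻¹ ^ d) * V)
        ≤ volume ((1:ℝ) • C + (2:ℝ)⁻¹ • B) := by
      calc (s.card : ℝ≥0∞) * (ENNReal.ofReal ((2:ℝ)⁻¹ ^ d) * V)
          = ∑ y ∈ s, volume (g y) := by
            rw [Finset.sum_congr rfl (fun y _ => hμg y)]
            simp [Finset.sum_const, mul_comm]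
        _ = volume (⋃ y ∈ s, g y) := by
            rw [measure_biUnion_finset hdisj (fun y _ => hmeas y)]
        _ ≤ volume ((1:ℝ) • C + (2:ℝ)⁻¹ • B) := measure_mono hunion
    have hbound := hvol 1 (2:ℝ)⁻¹ one_pos (by norm_num)
    have hkey : (s.card : ℝ≥0∞) * (ENNReal.ofReal ((2:ℝ)⁻¹ ^ d) * V)
        ≤ ENNReal.ofReal ((3*c) ^ d) * (ENNReal.ofReal ((2:ℝ)⁻¹ ^ d) * V) := by
      refine (hsum.trans hbound).trans_eq ?_
      rw [← mul_assoc, ← ENNReal.ofReal_mul (by positivity)]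
      congr 2
      rw [← mul_pow, ← mul_pow]
      congr 1
      ring
    have hne0 : ENNReal.ofReal ((2:ℝ)⁻¹ ^ d) * V ≠ 0 := by
      apply mul_ne_zero
      · rw [Ne, ENNReal.ofReal_eq_zero, not_le]
        positivity
      · exact hV.ne'
    have hnetop : ENNReal.ofReal ((2:ℝ)⁻¹ ^ d) * V ≠ ⊤ :=
      ENNReal.mul_ne_top ENNReal.ofReal_ne_top hVfin
    have hfinal : (s.card : ℝ≥0∞) ≤ ENNReal.ofReal ((3*c) ^ d) :=
      (ENNReal.mul_le_mul_iff_left hne0 hnetop).mp hkey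
    have h2 : (s.card : ℝ) ≤ (3*c) ^ d := by
      have h3 := ENNReal.toReal_mono ENNReal.ofReal_ne_top hfinal
      simpa [ENNReal.toReal_ofReal (by positivity : (0:ℝ) ≤ (3*c) ^ d)] using h3
    rw [Set.ncard_eq_toFinset_card Y hYfin]
    exact h2
  exact ⟨Y, hYlat, hYfin, hcard, hcover⟩
end

section
/- Let B, C ⊆ ℝ^d be centrally symmetric convex bodies of equal volume V > 0 such that vol(t₁·C + t₂·B) ≤ c^d (t₁ + t₂)^d V for all t₁, t₂ > 0, where c ≥ 1. Then there exist finite sets Y, Z ⊆ ℤ^d with |Y|, |Z| ≤ (3c)^d such that C ∩ ℤ^d ⊆ Y + (B ∩ ℤ^d) and B ∩ ℤ^d ⊆ Z + (C ∩ ℤ^d). -/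
open MeasureTheory
open scoped Pointwise ENNReal

lemma abs_coord_le (d : ℕ) (x : EuclideanSpace ℝ (Fin d)) (i : Fin d) : |x i| ≤ ‖x‖ := by
  have h1 : |x i|^2 ≤ ∑ j, ‖x j‖^2 := by
    rw [← Real.norm_eq_abs]
    exact Finset.single_le_sum (f := fun j => ‖x j‖^2) (fun j _ => sq_nonneg _) (Finset.mem_univ i)
  calc |x i| = Real.sqrt (|x i|^2) := by rw [Real.sqrt_sq_eq_abs, abs_abs]
    _ ≤ Real.sqrt (∑ j, ‖x j‖^2) := Real.sqrt_le_sqrt h1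
    _ = ‖x‖ := (EuclideanSpace.norm_eq x).symm

lemma lattice_inter_finite (d : ℕ) (C : Set (EuclideanSpace ℝ (Fin d))) (hC : IsCompact C) :
    (C ∩ intLattice d).Finite := by
  obtain ⟨R, hR⟩ := hC.isBounded.exists_norm_le
  set φ : (Fin d → ℤ) → EuclideanSpace ℝ (Fin d) := fun v => WithLp.toLp 2 (fun i => (v i : ℝ)) with hφ
  have hsub : C ∩ intLattice d ⊆ φ '' (Set.univ.pi fun _ : Fin d => Set.Icc (⌈-R⌉) ⌊R⌋) := by
    rintro x ⟨hxC, hxL⟩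
    have hs : ∀ i, ((Classical.choose (hxL i) : ℤ) : ℝ) = x i :=
      fun i => (Classical.choose_spec (hxL i)).symm
    refine ⟨fun i => Classical.choose (hxL i), fun i _ => ?_, by ext i; exact hs i⟩
    have h1 : |x i| ≤ R := (abs_coord_le d x i).trans (hR x hxC)
    constructor
    · rw [Int.ceil_le, hs i]; linarith [neg_abs_le (x i)]
    · rw [Int.le_floor, hs i]; linarith [le_abs_self (x i)]
  exact Set.Finite.subset (Set.Finite.image _ (Set.Finite.pi fun _ => Set.finite_Icc _ _)) hsub

lemma lattice_sub (d : ℕ) {x y : EuclideanSpace ℝ (Fin d)}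
    (hx : x ∈ intLattice d) (hy : y ∈ intLattice d) : x - y ∈ intLattice d := by
  intro i
  obtain ⟨n, hn⟩ := hx i; obtain ⟨m, hm⟩ := hy i
  exact ⟨n - m, by push_cast; rw [← hn, ← hm]; rfl⟩

lemma symm_conv_zero_mem (d : ℕ) {B : Set (EuclideanSpace ℝ (Fin d))} (hBconv : Convex ℝ B)
    (hBsymm : B = -B) (hne : B.Nonempty) : (0 : EuclideanSpace ℝ (Fin d)) ∈ B := by
  obtain ⟨x, hx⟩ := hne
  have hnx : -x ∈ B := by rw [hBsymm]; exact Set.neg_mem_neg.mpr hx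
  have := hBconv hx hnx (by norm_num : (0:ℝ) ≤ 1/2) (by norm_num : (0:ℝ) ≤ 1/2) (by norm_num)
  simpa using this

lemma cover_lemma (d : ℕ) (B C : Set (EuclideanSpace ℝ (Fin d)))
    (hBconv : Convex ℝ B) (hBsymm : B = -B) (hB0 : (0 : EuclideanSpace ℝ (Fin d)) ∈ B)
    (hBcpt : IsCompact B) (hCcpt : IsCompact C)
    (V : ℝ≥0∞) (hV0 : V ≠ 0) (hVfin : V ≠ ∞) (hBV : volume B = V)
    (c : ℝ) (hc : 1 ≤ c)
    (hvol1 : volume (C + (2⁻¹ : ℝ) • B) ≤ ENNReal.ofReal ((3*c)^d * 2⁻¹ ^ d) * V) :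
    ∃ Y : Set (EuclideanSpace ℝ (Fin d)), Y ⊆ intLattice d ∧ Y.Finite ∧
      (Y.ncard : ℝ) ≤ (3*c)^d ∧ C ∩ intLattice d ⊆ Y + (B ∩ intLattice d) := by
  classical
  set S : Finset (EuclideanSpace ℝ (Fin d)) := (lattice_inter_finite d C hCcpt).toFinset with hS
  have hSmem : ∀ x, x ∈ S ↔ x ∈ C ∩ intLattice d := fun x => Set.Finite.mem_toFinset _
  set P : Finset (EuclideanSpace ℝ (Fin d)) → Prop :=
    fun T => ∀ x ∈ T, ∀ y ∈ T, x ≠ y → x - y ∉ B with hP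
  obtain ⟨T, hT𝒮, hTmax⟩ := Finset.exists_max_image (S.powerset.filter P) Finset.card
    ⟨∅, by simp [hP]⟩
  rw [Finset.mem_filter, Finset.mem_powerset] at hT𝒮
  obtain ⟨hTS, hsep⟩ := hT𝒮
  -- covering property
  have hcover : ∀ z ∈ C ∩ intLattice d, ∃ y ∈ T, z - y ∈ B := by
    intro z hz
    by_cases hzT : z ∈ T
    · exact ⟨z, hzT, by simpa using hB0⟩
    by_contra hcon
    push_neg at hcon
    have hcon' : ∀ y ∈ T, z - y ∉ B ∧ y - z ∉ B := by
      intro y hy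
      refine ⟨hcon y hy, fun h => hcon y hy ?_⟩
      rw [hBsymm]
      simpa using h
    have hins : insert z T ∈ S.powerset.filter P := by
      rw [Finset.mem_filter, Finset.mem_powerset]
      refine ⟨Finset.insert_subset ((hSmem z).mpr hz) hTS, ?_⟩
      intro x hx y hy hxy
      rcases Finset.mem_insert.mp hx with hx0 | hx'
      · rcases Finset.mem_insert.mp hy with hy0 | hy'
        · exact absurd (hx0.trans hy0.symm) hxy
        · rw [hx0]; exact (hcon' y hy').1
      · rcases Finset.mem_insert.mp hy with hy0 | hy'
        · rw [hy0]; exact (hcon' x hx').2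
        · exact hsep x hx' y hy' hxy
    have := hTmax _ hins
    rw [Finset.card_insert_of_notMem hzT] at this
    omega
  -- volume counting
  set s : Set (EuclideanSpace ℝ (Fin d)) := (2⁻¹ : ℝ) • B with hs
  have hscpt : IsCompact s := by
    rw [hs, ← Set.image_smul]
    exact hBcpt.image (continuous_const_smul _)
  have hdisj : (↑T : Set (EuclideanSpace ℝ (Fin d))).PairwiseDisjoint (fun y => y +ᵥ s) := by
    intro y₁ hy₁ y₂ hy₂ hne
    simp only [Function.onFun]
    rw [Set.disjoint_left]
    rintro a ha₁ ha₂
    rw [Set.mem_vadd_set] at ha₁ ha₂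
    obtain ⟨b₁, hb₁, hab₁⟩ := ha₁
    obtain ⟨b₂, hb₂, hab₂⟩ := ha₂
    rw [hs, Set.mem_smul_set] at hb₁ hb₂
    obtain ⟨w₁, hw₁, rfl⟩ := hb₁
    obtain ⟨w₂, hw₂, rfl⟩ := hb₂
    have heq : y₁ + (2⁻¹:ℝ) • w₁ = y₂ + (2⁻¹:ℝ) • w₂ := by
      rw [← vadd_eq_add, ← vadd_eq_add, hab₁, hab₂]
    have hweq : y₁ - y₂ = (2⁻¹:ℝ) • w₂ + (2⁻¹:ℝ) • (-w₁) := by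
      rw [smul_neg, ← sub_eq_add_neg, sub_eq_sub_iff_add_eq_add, heq, add_comm]
    have hmem : y₁ - y₂ ∈ B := by
      rw [hweq]
      exact hBconv hw₂ (by rw [hBsymm]; simpa using hw₁)
        (by norm_num) (by norm_num) (by norm_num)
    exact hsep y₁ (Finset.mem_coe.mp hy₁) y₂ (Finset.mem_coe.mp hy₂) hne hmem
  have hmeas : ∀ y ∈ T, MeasurableSet (y +ᵥ s) := by
    intro y _
    have : IsCompact (y +ᵥ s) := by
      rw [← Set.image_vadd]
      exact hscpt.image (continuous_const_vadd y)
    exact this.isClosed.measurableSet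
  have hsum : volume (⋃ y ∈ T, y +ᵥ s) = ∑ y ∈ T, volume (y +ᵥ s) :=
    measure_biUnion_finset hdisj hmeas
  have hvs : volume s = ENNReal.ofReal (2⁻¹ ^ d) * V := by
    rw [hs, Measure.addHaar_smul, finrank_euclideanSpace_fin, hBV, abs_pow, abs_of_nonneg]
    norm_num
  have hUsub : (⋃ y ∈ T, y +ᵥ s) ⊆ C + s := by
    intro a ha
    rw [Set.mem_iUnion₂] at ha
    obtain ⟨y, hyT, ha⟩ := ha
    rw [Set.mem_vadd_set] at ha
    obtain ⟨b, hb, rfl⟩ := ha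
    exact Set.add_mem_add ((hSmem y).mp (hTS hyT)).1 hb
  have hcount : ((T.card : ℝ≥0∞) * ENNReal.ofReal (2⁻¹ ^ d)) * V ≤
      ENNReal.ofReal ((3*c)^d * 2⁻¹ ^ d) * V := by
    calc ((T.card : ℝ≥0∞) * ENNReal.ofReal (2⁻¹ ^ d)) * V
        = ∑ _y ∈ T, ENNReal.ofReal (2⁻¹ ^ d) * V := by
          rw [Finset.sum_const, nsmul_eq_mul, mul_assoc]
      _ = ∑ y ∈ T, volume (y +ᵥ s) := by
          refine Finset.sum_congr rfl fun y _ => ?_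
          rw [measure_vadd, hvs]
      _ = volume (⋃ y ∈ T, y +ᵥ s) := hsum.symm
      _ ≤ volume (C + s) := measure_mono hUsub
      _ ≤ _ := hvol1
  have h1 : (T.card : ℝ≥0∞) * ENNReal.ofReal (2⁻¹ ^ d) ≤ ENNReal.ofReal ((3*c)^d * 2⁻¹ ^ d) :=
    (ENNReal.mul_le_mul_iff_left hV0 hVfin).mp hcount
  have h2 : (T.card : ℝ≥0∞) ≤ ENNReal.ofReal ((3*c)^d) := by
    rw [ENNReal.ofReal_mul (by positivity)] at h1
    exact (ENNReal.mul_le_mul_iff_left (ne_of_gt (ENNReal.ofReal_pos.mpr (by positivity)))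
      ENNReal.ofReal_ne_top).mp h1
  have hcard : (T.card : ℝ) ≤ (3*c)^d := by
    rw [← ENNReal.ofReal_natCast] at h2
    exact (ENNReal.ofReal_le_ofReal_iff (by positivity)).mp h2
  refine ⟨↑T, ?_, T.finite_toSet, ?_, ?_⟩
  · intro y hy
    exact ((hSmem y).mp (hTS (Finset.mem_coe.mp hy))).2
  · rw [Set.ncard_coe_finset]
    exact hcard
  · intro z hz
    obtain ⟨y, hyT, hzy⟩ := hcover z hz
    have hyL : y ∈ intLattice d := ((hSmem y).mp (hTS hyT)).2
    have : y + (z - y) = z := by abel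
    exact this ▸ Set.add_mem_add (Finset.mem_coe.mpr hyT) ⟨hzy, lattice_sub d hz.2 hyL⟩

theorem stmt_4 (d : ℕ) (B C : Set (EuclideanSpace ℝ (Fin d)))
    (hCcpt : IsCompact C) (hCconv : Convex ℝ C) (hCint : (interior C).Nonempty)
    (hCsymm : C = -C)
    (hBcpt : IsCompact B) (hBconv : Convex ℝ B) (hBint : (interior B).Nonempty)
    (hBsymm : B = -B)
    (V : ℝ≥0∞) (hV : 0 < V) (hCV : volume C = V) (hBV : volume B = V)
    (c : ℝ) (hc : 1 ≤ c)
    (hvol : ∀ t₁ t₂ : ℝ, 0 < t₁ → 0 < t₂ →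
      volume (t₁ • C + t₂ • B) ≤ ENNReal.ofReal (c ^ d * (t₁ + t₂) ^ d) * V) :
    ∃ Y Z : Set (EuclideanSpace ℝ (Fin d)),
      Y ⊆ intLattice d ∧ Z ⊆ intLattice d ∧ Y.Finite ∧ Z.Finite ∧
      (Y.ncard : ℝ) ≤ (3 * c) ^ d ∧ (Z.ncard : ℝ) ≤ (3 * c) ^ d ∧
      C ∩ intLattice d ⊆ Y + (B ∩ intLattice d) ∧
      B ∩ intLattice d ⊆ Z + (C ∩ intLattice d) := by
  have hB0 : (0 : EuclideanSpace ℝ (Fin d)) ∈ B :=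
    symm_conv_zero_mem d hBconv hBsymm ⟨_, interior_subset hBint.choose_spec⟩
  have hC0 : (0 : EuclideanSpace ℝ (Fin d)) ∈ C :=
    symm_conv_zero_mem d hCconv hCsymm ⟨_, interior_subset hCint.choose_spec⟩
  have hVfin : V ≠ ∞ := by rw [← hBV]; exact hBcpt.measure_lt_top.ne
  have hkey : ENNReal.ofReal (c ^ d * (1 + 2⁻¹) ^ d) = ENNReal.ofReal ((3*c)^d * 2⁻¹ ^ d) := by
    congr 1
    rw [← mul_pow, ← mul_pow]
    congr 1
    ring
  have hvolCB : volume (C + (2⁻¹ : ℝ) • B) ≤ ENNReal.ofReal ((3*c)^d * 2⁻¹ ^ d) * V := by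
    have := hvol 1 2⁻¹ one_pos (by norm_num)
    rw [one_smul, hkey] at this
    exact this
  have hvolBC : volume (B + (2⁻¹ : ℝ) • C) ≤ ENNReal.ofReal ((3*c)^d * 2⁻¹ ^ d) * V := by
    have := hvol 2⁻¹ 1 (by norm_num) one_pos
    rw [one_smul, add_comm ((2⁻¹:ℝ) • C)] at this
    rw [show (2⁻¹ + 1 : ℝ) = 1 + 2⁻¹ by ring, hkey] at this
    exact this
  obtain ⟨Y, hY⟩ := cover_lemma d B C hBconv hBsymm hB0 hBcpt hCcpt V hV.ne' hVfin hBV c hc hvolCB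
  obtain ⟨Z, hZ⟩ := cover_lemma d C B hCconv hCsymm hC0 hCcpt hBcpt V hV.ne' hVfin hCV c hc hvolBC
  exact ⟨Y, Z, hY.1, hZ.1, hY.2.1, hZ.2.1, hY.2.2.1, hZ.2.2.1, hY.2.2.2, hZ.2.2.2⟩
end

section
/- Let B, C ⊆ ℝ^d be centrally symmetric convex bodies of equal volume satisfying vol(t₁·C + t₂·B) ≤ c^d (t₁ + t₂)^d vol(B) for all t₁, t₂ > 0 with c ≥ 1. Then |B ∩ ℤ^d| ≤ (3c)^d · |C ∩ ℤ^d| and |C ∩ ℤ^d| ≤ (3c)^d · |B ∩ ℤ^d|. -/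
open MeasureTheory
open scoped Pointwise ENNReal

lemma abs_coord_le_norm {d : ℕ} (x : EuclideanSpace ℝ (Fin d)) (i : Fin d) :
    |x i| ≤ ‖x‖ := by
  rw [EuclideanSpace.norm_eq]
  have h1 : |x i| ^ 2 ≤ ∑ j : Fin d, ‖x j‖ ^ 2 := by
    have : |x i| ^ 2 = ‖x i‖ ^ 2 := by rw [Real.norm_eq_abs]
    rw [this]
    exact Finset.single_le_sum (f := fun j => ‖x j‖ ^ 2) (fun j _ => by positivity) (Finset.mem_univ i)
  calc |x i| = Real.sqrt (|x i| ^ 2) := (Real.sqrt_sq (abs_nonneg _)).symm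
    _ ≤ _ := Real.sqrt_le_sqrt h1

lemma intLattice_finite {d : ℕ} {B : Set (EuclideanSpace ℝ (Fin d))}
    (hB : IsCompact B) : (B ∩ intLattice d).Finite := by
  obtain ⟨R, hR⟩ := hB.isBounded.subset_closedBall 0
  have key : (B ∩ intLattice d) ⊆
      (fun n : Fin d → ℤ => (WithLp.toLp 2 (fun i => (n i : ℝ)) : EuclideanSpace ℝ (Fin d))) ''
        (Set.pi Set.univ fun _ : Fin d => Set.Icc (-⌈R⌉) ⌈R⌉) := by
    rintro x ⟨hxB, hxL⟩
    choose n hn using hxL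
    refine ⟨n, fun i _ => ?_, by ext i; exact (hn i).symm⟩
    have hx : ‖x‖ ≤ R := by simpa using hR hxB
    have hxi : |x i| ≤ R := (abs_coord_le_norm x i).trans hx
    rw [hn i] at hxi
    have : |(n i : ℝ)| ≤ (⌈R⌉ : ℝ) := hxi.trans (Int.le_ceil R)
    rw [← Int.cast_abs, Int.cast_le] at this
    exact Set.mem_Icc.2 ⟨neg_le_of_abs_le this, le_of_abs_le this⟩
  exact (Set.Finite.pi fun _ => Set.finite_Icc _ _).image _ |>.subset key

lemma intLattice_add {d : ℕ} {x y : EuclideanSpace ℝ (Fin d)}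
    (hx : x ∈ intLattice d) (hy : y ∈ intLattice d) : x + y ∈ intLattice d := by
  intro i
  obtain ⟨n, hn⟩ := hx i
  obtain ⟨m, hm⟩ := hy i
  refine ⟨n + m, ?_⟩
  have : (x + y) i = x i + y i := rfl
  rw [this, hn, hm]; push_cast; ring

lemma vadd_inter_lattice {d : ℕ} {t : EuclideanSpace ℝ (Fin d)} (ht : t ∈ intLattice d)
    (C : Set (EuclideanSpace ℝ (Fin d))) :
    (t +ᵥ C) ∩ intLattice d = (fun y => t + y) '' (C ∩ intLattice d) := by
  ext x
  constructor
  · rintro ⟨⟨y, hy, rfl⟩, hxL⟩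
    refine ⟨y, ⟨hy, ?_⟩, rfl⟩
    have h := intLattice_sub hxL ht
    simpa [vadd_eq_add] using h
  · rintro ⟨y, ⟨hyC, hyL⟩, rfl⟩
    exact ⟨⟨y, hyC, rfl⟩, intLattice_add ht hyL⟩

lemma core {d : ℕ} {B C : Set (EuclideanSpace ℝ (Fin d))} {c : ℝ}
    (hCcpt : IsCompact C) (hCconv : Convex ℝ C) (hCsymm : C = -C)
    (hCint : (interior C).Nonempty)
    (hBcpt : IsCompact B) (hc : 0 ≤ c)
    (hkey : volume ((2⁻¹ : ℝ) • C + B) ≤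
      ENNReal.ofReal (c ^ d * (3 / 2 : ℝ) ^ d) * volume C) :
    ((B ∩ intLattice d).ncard : ℝ) ≤ (3 * c) ^ d * (C ∩ intLattice d).ncard := by
  classical
  have hC0 : (0 : EuclideanSpace ℝ (Fin d)) ∈ C := by
    obtain ⟨x, hx⟩ := hCint
    have hxC : x ∈ C := interior_subset hx
    have hnx : -x ∈ C := by rw [hCsymm, Set.mem_neg, neg_neg]; exact hxC
    have h := hCconv hxC hnx (by norm_num : (0:ℝ) ≤ 1/2) (by norm_num : (0:ℝ) ≤ 1/2)
      (by norm_num)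
    have h0 : (1/2 : ℝ) • x + (1/2 : ℝ) • (-x) = 0 := by module
    rwa [h0] at h
  have hCC : (2⁻¹ : ℝ) • C + (2⁻¹ : ℝ) • C = C := by
    have h := hCconv.add_smul (p := (2⁻¹:ℝ)) (q := (2⁻¹:ℝ)) (by norm_num) (by norm_num)
    rw [← h]; norm_num
  set L := intLattice d with hL_def
  have hS : (B ∩ L).Finite := intLattice_finite hBcpt
  set s : Finset (EuclideanSpace ℝ (Fin d)) := hS.toFinset with hs_def
  set Q : Finset (EuclideanSpace ℝ (Fin d)) → Prop :=
    fun T => ∀ x ∈ T, ∀ y ∈ T, x ≠ y → x - y ∉ C with hQ_def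
  have hne : (s.powerset.filter Q).Nonempty := ⟨∅, by simp [hQ_def]⟩
  obtain ⟨T, hTmem, hTmax⟩ := Finset.exists_max_image (s.powerset.filter Q)
    Finset.card hne
  rw [Finset.mem_filter, Finset.mem_powerset] at hTmem
  obtain ⟨hTs, hTQ⟩ := hTmem
  have hcover : ∀ x ∈ s, ∃ t ∈ T, x - t ∈ C := by
    intro x hx
    by_contra hcon
    push_neg at hcon
    have hxT : x ∉ T := fun hxT => hcon x hxT (by simpa using hC0)
    have hQ' : Q (insert x T) := by
      intro a ha b hb hab
      rcases Finset.mem_insert.1 ha with rfl | haT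
      · rcases Finset.mem_insert.1 hb with rfl | hbT
        · exact absurd rfl hab
        · exact hcon b hbT
      · rcases Finset.mem_insert.1 hb with rfl | hbT
        · intro hmem
          apply hcon a haT
          rw [hCsymm, Set.mem_neg, neg_sub]
          exact hmem
        · exact hTQ a haT b hbT hab
    have hmemf : insert x T ∈ s.powerset.filter Q := by
      rw [Finset.mem_filter, Finset.mem_powerset]
      exact ⟨Finset.insert_subset hx hTs, hQ'⟩
    have := hTmax _ hmemf
    rw [Finset.card_insert_of_notMem hxT] at this
    omega
  have hcard1 : s.card ≤ T.card * (C ∩ L).ncard := by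
    have hFfin : ∀ t ∈ T, ((t +ᵥ C) ∩ L).Finite := by
      intro t ht
      have htL : t ∈ L := (hS.mem_toFinset.1 (hTs ht)).2
      rw [hL_def] at htL ⊢
      rw [vadd_inter_lattice htL C]
      exact (intLattice_finite hCcpt).image _
    set F : EuclideanSpace ℝ (Fin d) → Finset (EuclideanSpace ℝ (Fin d)) :=
      fun t => if h : t ∈ T then (hFfin t h).toFinset else ∅ with hF_def
    have hsub : s ⊆ T.biUnion F := by
      intro x hx
      obtain ⟨t, htT, hxt⟩ := hcover x hx
      refine Finset.mem_biUnion.2 ⟨t, htT, ?_⟩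
      rw [hF_def]; simp only [dif_pos htT]
      rw [Set.Finite.mem_toFinset]
      exact ⟨⟨x - t, hxt, by simp [vadd_eq_add]⟩, (hS.mem_toFinset.1 hx).2⟩
    have hcardF : ∀ t ∈ T, (F t).card = (C ∩ L).ncard := by
      intro t ht
      have htL : t ∈ L := (hS.mem_toFinset.1 (hTs ht)).2
      rw [hF_def]; simp only [dif_pos ht]
      rw [← Set.ncard_eq_toFinset_card _ (hFfin t ht)]
      rw [hL_def] at htL ⊢
      rw [vadd_inter_lattice htL C]
      exact Set.ncard_image_of_injective _ (add_right_injective t)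
    calc s.card ≤ (T.biUnion F).card := Finset.card_le_card hsub
      _ ≤ ∑ t ∈ T, (F t).card := Finset.card_biUnion_le
      _ = T.card * (C ∩ L).ncard := by
          rw [Finset.sum_congr rfl hcardF, Finset.sum_const, smul_eq_mul]
  have hTcard : (T.card : ℝ) ≤ (3 * c) ^ d := by
    set G : EuclideanSpace ℝ (Fin d) → Set (EuclideanSpace ℝ (Fin d)) :=
      fun t => t +ᵥ ((2⁻¹ : ℝ) • C) with hG_def
    have hhalf_cpt : IsCompact ((2⁻¹ : ℝ) • C) := IsCompact.smul _ hCcpt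
    have hGmeas : ∀ t ∈ T, MeasurableSet (G t) := fun t _ =>
      (hhalf_cpt.vadd t).isClosed.measurableSet
    have hdisj : (T : Set (EuclideanSpace ℝ (Fin d))).PairwiseDisjoint G := by
      intro t₁ ht₁ t₂ ht₂ hne'
      rw [Function.onFun, Set.disjoint_left]
      rintro z ⟨z₁, hz₁, rfl⟩ ⟨z₂, hz₂, hz₂eq⟩
      have hnz₁ : -z₁ ∈ (2⁻¹ : ℝ) • C := by
        obtain ⟨w, hw, rfl⟩ := hz₁
        have hnw : -w ∈ C := by rw [hCsymm, Set.mem_neg, neg_neg]; exact hw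
        exact ⟨-w, hnw, by simp⟩
      have ht12 : t₁ - t₂ ∈ C := by
        have heq : t₁ - t₂ = z₂ + (-z₁) := by
          simp only [vadd_eq_add] at hz₂eq
          rw [← sub_eq_zero]
          have h : t₂ + z₂ - (t₁ + z₁) = 0 := by rw [hz₂eq]; exact sub_self _
          calc t₁ - t₂ - (z₂ + -z₁) = -(t₂ + z₂ - (t₁ + z₁)) := by abel
            _ = 0 := by rw [h, neg_zero]
        rw [heq, ← hCC]
        exact Set.add_mem_add hz₂ hnz₁
      exact hTQ t₁ (by exact_mod_cast ht₁) t₂ (by exact_mod_cast ht₂) hne' ht12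
    have hvol_union : volume (⋃ t ∈ T, G t) = ∑ t ∈ T, volume (G t) :=
      measure_biUnion_finset hdisj hGmeas
    have hGvol : ∀ t ∈ T, volume (G t) = ENNReal.ofReal ((2⁻¹:ℝ) ^ d) * volume C := by
      intro t _
      rw [hG_def]
      simp only
      rw [measure_vadd, Measure.addHaar_smul, finrank_euclideanSpace_fin,
        abs_of_nonneg (by positivity)]
    have hsubU : (⋃ t ∈ T, G t) ⊆ (2⁻¹:ℝ) • C + B := by
      intro z hz
      simp only [Set.mem_iUnion] at hz
      obtain ⟨t, ht, z₁, hz₁, rfl⟩ := hz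
      have htB : t ∈ B := (hS.mem_toFinset.1 (hTs ht)).1
      exact ⟨z₁, hz₁, t, htB, by simp [vadd_eq_add, add_comm]⟩
    have hle : ((T.card : ℝ≥0∞) * ENNReal.ofReal ((2⁻¹:ℝ)^d)) * volume C
        ≤ ENNReal.ofReal (c ^ d * (3/2:ℝ)^d) * volume C := by
      calc ((T.card : ℝ≥0∞) * ENNReal.ofReal ((2⁻¹:ℝ)^d)) * volume C
          = ∑ t ∈ T, volume (G t) := by
            rw [Finset.sum_congr rfl hGvol, Finset.sum_const, nsmul_eq_mul, mul_assoc]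
        _ = volume (⋃ t ∈ T, G t) := hvol_union.symm
        _ ≤ volume ((2⁻¹:ℝ) • C + B) := measure_mono hsubU
        _ ≤ _ := hkey
    have hCpos : volume C ≠ 0 := (Measure.measure_pos_of_nonempty_interior _ hCint).ne'
    have hCfin : volume C ≠ ⊤ := hCcpt.measure_lt_top.ne
    have h2 : (T.card : ℝ≥0∞) * ENNReal.ofReal ((2⁻¹:ℝ)^d)
        ≤ ENNReal.ofReal (c ^ d * (3/2:ℝ)^d) :=
      (ENNReal.mul_le_mul_iff_left hCpos hCfin).1 hle
    have h3 : c ^ d * (3/2:ℝ)^d = (3*c)^d * (2⁻¹:ℝ)^d := by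
      rw [← mul_pow, ← mul_pow]; congr 1; ring
    rw [h3, ENNReal.ofReal_mul (by positivity)] at h2
    have hne0 : ENNReal.ofReal ((2⁻¹:ℝ)^d) ≠ 0 := by
      rw [ne_eq, ENNReal.ofReal_eq_zero, not_le]
      positivity
    have h4 : (T.card : ℝ≥0∞) ≤ ENNReal.ofReal ((3*c)^d) :=
      (ENNReal.mul_le_mul_iff_left hne0 ENNReal.ofReal_ne_top).1 h2
    rw [← ENNReal.ofReal_natCast T.card,
      ENNReal.ofReal_le_ofReal_iff (by positivity)] at h4
    exact h4
  have hncard : (B ∩ L).ncard = s.card := Set.ncard_eq_toFinset_card _ hS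
  rw [hncard]
  calc (s.card : ℝ) ≤ (T.card : ℝ) * (C ∩ L).ncard := by exact_mod_cast hcard1
    _ ≤ (3*c)^d * (C ∩ L).ncard :=
      mul_le_mul_of_nonneg_right hTcard (by positivity)

theorem stmt_5 (d : ℕ) (B C : Set (EuclideanSpace ℝ (Fin d)))
    (hCcpt : IsCompact C) (hCconv : Convex ℝ C) (hCint : (interior C).Nonempty)
    (hCsymm : C = -C)
    (hBcpt : IsCompact B) (hBconv : Convex ℝ B) (hBint : (interior B).Nonempty)
    (hBsymm : B = -B)
    (hvolEq : volume C = volume B)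
    (c : ℝ) (hc : 1 ≤ c)
    (hvol : ∀ t₁ t₂ : ℝ, 0 < t₁ → 0 < t₂ →
      volume (t₁ • C + t₂ • B) ≤ ENNReal.ofReal (c ^ d * (t₁ + t₂) ^ d) * volume B) :
    ((B ∩ intLattice d).ncard : ℝ) ≤ (3 * c) ^ d * (C ∩ intLattice d).ncard ∧
    ((C ∩ intLattice d).ncard : ℝ) ≤ (3 * c) ^ d * (B ∩ intLattice d).ncard := by
  have hc0 : (0:ℝ) ≤ c := le_trans zero_le_one hc
  constructor
  · apply core hCcpt hCconv hCsymm hCint hBcpt hc0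
    have h := hvol 2⁻¹ 1 (by norm_num) one_pos
    rw [one_smul] at h
    rw [hvolEq]
    convert h using 3
    norm_num
  · apply core hBcpt hBconv hBsymm hBint hCcpt hc0
    have h := hvol 1 2⁻¹ one_pos (by norm_num)
    rw [one_smul, add_comm C ((2⁻¹:ℝ) • B)] at h
    convert h using 3
    norm_num
end

section
/- If the convex-progression formulation of the polynomial Freĭman–Ruzsa conjecture holds, and Milman's reverse Brunn–Minkowski inequality holds, then the ellipsoid formulation of the polynomial Freĭman–Ruzsa conjecture holds: for G = ℤ^m or ℝ^m and finite A ⊆ G with |A+A| ≤ K|A|, there exist d ≤ C log(2K), a₀,…,a_d ∈ G, γ ∈ GL_d(ℝ), and X ⊆ G with |X| ≤ C K^C and |{n ∈ ℤ^d : ‖γ(n)‖₂ ≤ 1}| ≤ C K^C |A|, such that A ⊆ X + {a₀ + n₁a₁ + ⋯ + n_d a_d : n ∈ ℤ^d, ‖γ(n)‖₂ ≤ 1}, where C is an absolute constant. -/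
open MeasureTheory
open scoped Pointwise ENNReal

/-- Embedding of `ℤ^d` into the Euclidean space `ℝ^d`. -/
def intEmb (d : ℕ) (n : Fin d → ℤ) : EuclideanSpace ℝ (Fin d) :=
  WithLp.toLp 2 (fun i => (n i : ℝ))

/-- The convex-progression formulation of the polynomial Freĭman–Ruzsa
conjecture for a group `G`, with constant `C`. -/
def ConvexPFR (C : ℝ) (G : Type) [AddCommGroup G] : Prop :=
  ∀ (K : ℝ) (A : Set G), 1 ≤ K → A.Finite → A.Nonempty →
    ((A + A).ncard : ℝ) ≤ K * A.ncard →
    ∃ (d : ℕ) (B : Set (EuclideanSpace ℝ (Fin d))) (a₀ : G) (a : Fin d → G)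
      (X : Set G),
      (d : ℝ) ≤ C * Real.log (2 * K) ∧
      IsCompact B ∧ Convex ℝ B ∧ (interior B).Nonempty ∧ B = -B ∧
      {n : Fin d → ℤ | intEmb d n ∈ B}.Finite ∧
      ({n : Fin d → ℤ | intEmb d n ∈ B}.ncard : ℝ) ≤ C * K ^ C * A.ncard ∧
      X.Finite ∧ (X.ncard : ℝ) ≤ C * K ^ C ∧
      A ⊆ X + (fun n : Fin d → ℤ => a₀ + ∑ i, n i • a i) ''
        {n | intEmb d n ∈ B}

/-- The ellipsoid formulation of the polynomial Freĭman–Ruzsa conjecture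
for a group `G`, with constant `C`. -/
def EllipsoidPFR (C : ℝ) (G : Type) [AddCommGroup G] : Prop :=
  ∀ (K : ℝ) (A : Set G), 1 ≤ K → A.Finite → A.Nonempty →
    ((A + A).ncard : ℝ) ≤ K * A.ncard →
    ∃ (d : ℕ) (γ : Matrix (Fin d) (Fin d) ℝ) (a₀ : G) (a : Fin d → G)
      (X : Set G),
      (d : ℝ) ≤ C * Real.log (2 * K) ∧ IsUnit γ.det ∧
      {n : Fin d → ℤ | Real.sqrt (∑ i, (γ.mulVec (fun j => (n j : ℝ)) i) ^ 2) ≤ 1}.Finite ∧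
      ({n : Fin d → ℤ |
          Real.sqrt (∑ i, (γ.mulVec (fun j => (n j : ℝ)) i) ^ 2) ≤ 1}.ncard : ℝ) ≤
        C * K ^ C * A.ncard ∧
      X.Finite ∧ (X.ncard : ℝ) ≤ C * K ^ C ∧
      A ⊆ X + (fun n : Fin d → ℤ => a₀ + ∑ i, n i • a i) ''
        {n | Real.sqrt (∑ i, (γ.mulVec (fun j => (n j : ℝ)) i) ^ 2) ≤ 1}

/-- Milman's reverse Brunn–Minkowski inequality with constant `c`. -/
def MilmanRBM (c : ℝ) : Prop :=
  ∀ (d : ℕ), 0 < d → ∀ B₁ B₂ : Set (EuclideanSpace ℝ (Fin d)),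
    IsCompact B₁ → Convex ℝ B₁ → (interior B₁).Nonempty →
    IsCompact B₂ → Convex ℝ B₂ → (interior B₂).Nonempty →
    ∃ γ₁ γ₂ : Matrix.SpecialLinearGroup (Fin d) ℝ,
      ∀ t₁ t₂ : ℝ, 0 < t₁ → 0 < t₂ →
        volume (t₁ • (Matrix.toEuclideanLin (γ₁ : Matrix (Fin d) (Fin d) ℝ) '' B₁) +
            t₂ • (Matrix.toEuclideanLin (γ₂ : Matrix (Fin d) (Fin d) ℝ) '' B₂)) ^
            ((1 : ℝ) / d) ≤
          ENNReal.ofReal c *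
            (ENNReal.ofReal t₁ * volume B₁ ^ ((1 : ℝ) / d) +
             ENNReal.ofReal t₂ * volume B₂ ^ ((1 : ℝ) / d))


open Metric Set

namespace PFRAux

abbrev ES (d : ℕ) := EuclideanSpace ℝ (Fin d)

/-- Lattice points of a subset of Euclidean space. -/
def latt (d : ℕ) (S : Set (ES d)) : Set (Fin d → ℤ) := {n | intEmb d n ∈ S}

variable {d : ℕ}

lemma intEmb_add (n m : Fin d → ℤ) : intEmb d (n + m) = intEmb d n + intEmb d m := by
  ext i; simp [intEmb]

lemma intEmb_neg (n : Fin d → ℤ) : intEmb d (-n) = -intEmb d n := by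
  ext i; simp [intEmb]

lemma intEmb_sub (n m : Fin d → ℤ) : intEmb d (n - m) = intEmb d n - intEmb d m := by
  ext i; simp [intEmb]

lemma intEmb_zero : intEmb d 0 = 0 := by
  ext i; simp [intEmb]

lemma intEmb_inj : Function.Injective (intEmb d) := by
  intro n m h
  funext i
  have : ((n i : ℝ)) = (m i : ℝ) := congrArg (fun x : ES d => x i) h
  exact_mod_cast this

lemma latt_mono {S T : Set (ES d)} (h : S ⊆ T) : latt d S ⊆ latt d T :=
  fun _ hn => h hn

lemma abs_coord_le_norm (x : ES d) (i : Fin d) : |x i| ≤ ‖x‖ := by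
  rw [EuclideanSpace.norm_eq]
  rw [← Real.sqrt_sq_eq_abs]
  apply Real.sqrt_le_sqrt
  have : x i ^ 2 ≤ ∑ j, ‖x j‖ ^ 2 := by
    have := Finset.single_le_sum (f := fun j => ‖x j‖ ^ 2)
      (fun j _ => by positivity) (Finset.mem_univ i)
    simpa [Real.norm_eq_abs, sq_abs] using this
  exact this

lemma latt_finite {S : Set (ES d)} (hS : Bornology.IsBounded S) : (latt d S).Finite := by
  obtain ⟨R, hR⟩ := hS.subset_closedBall 0
  have : latt d S ⊆ Set.Icc (fun _ => -⌈R⌉) (fun _ => ⌈R⌉) := by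
    intro n hn
    have hx : intEmb d n ∈ closedBall (0 : ES d) R := hR hn
    rw [mem_closedBall_zero_iff] at hx
    constructor <;> intro i
    · have h1 : |(n i : ℝ)| ≤ R := by have := (abs_coord_le_norm (intEmb d n) i).trans hx; exact this
      have : -(⌈R⌉ : ℝ) ≤ (n i : ℝ) := by
        have := neg_abs_le (n i : ℝ)
        have h2 : R ≤ (⌈R⌉ : ℝ) := Int.le_ceil R
        linarith
      exact_mod_cast this
    · have h1 : |(n i : ℝ)| ≤ R := by have := (abs_coord_le_norm (intEmb d n) i).trans hx; exact this
      have : (n i : ℝ) ≤ (⌈R⌉ : ℝ) := by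
        have := le_abs_self (n i : ℝ)
        have h2 : R ≤ (⌈R⌉ : ℝ) := Int.le_ceil R
        linarith
      exact_mod_cast this
  exact (Set.finite_Icc _ _).subset this

lemma ncard_add_le {G : Type*} [AddCommGroup G] {s t : Set G} (hs : s.Finite) (ht : t.Finite) :
    (s + t).ncard ≤ s.ncard * t.ncard := by
  classical
  have h1 : s + t = ↑(hs.toFinset + ht.toFinset) := by
    rw [Finset.coe_add, hs.coe_toFinset, ht.coe_toFinset]
  rw [h1, Set.ncard_coe_finset]
  calc (hs.toFinset + ht.toFinset).card ≤ hs.toFinset.card * ht.toFinset.card :=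
        Finset.card_add_le
    _ = s.ncard * t.ncard := by rw [← Set.ncard_coe_finset, ← Set.ncard_coe_finset,
        hs.coe_toFinset, ht.coe_toFinset]

/-- The key multiplicity-counting lemma: for a symmetric convex `C`,
`|S ∩ ℤ^d| ⬝ vol(½C) ≤ |C ∩ ℤ^d| ⬝ vol(S + ½C)`. -/
lemma cover_count (S C : Set (ES d)) (hCconv : Convex ℝ C) (hCsym : C = -C)
    (hChalf : MeasurableSet ((2⁻¹ : ℝ) • C))
    (hSfin : (latt d S).Finite) (hCfin : (latt d C).Finite) :
    ((latt d S).ncard : ℝ≥0∞) * volume ((2⁻¹ : ℝ) • C) ≤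
      ((latt d C).ncard : ℝ≥0∞) * volume (S + (2⁻¹ : ℝ) • C) := by
  classical
  set Ch := (2⁻¹ : ℝ) • C with hCh
  set I : Finset (Fin d → ℤ) := hSfin.toFinset with hI
  set NC : ℝ≥0∞ := ((latt d C).ncard : ℝ≥0∞)
  -- half + half = whole
  have hhalf : Ch + Ch = C := by
    rw [hCh, ← Convex.add_smul hCconv (by norm_num) (by norm_num)]
    norm_num
  -- pointwise bound on the sum of indicators
  have hpt : ∀ x : ES d, (∑ n ∈ I, (intEmb d n +ᵥ Ch).indicator (1 : ES d → ℝ≥0∞) x)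
      ≤ NC * (S + Ch).indicator 1 x := by
    intro x
    by_cases hx : x ∈ S + Ch
    · -- count the n's with x ∈ n + Ch
      have hsum : (∑ n ∈ I, (intEmb d n +ᵥ Ch).indicator (1 : ES d → ℝ≥0∞) x)
          = ((I.filter (fun n => x ∈ intEmb d n +ᵥ Ch)).card : ℝ≥0∞) := by
        rw [Finset.card_filter]
        push_cast
        apply Finset.sum_congr rfl
        intro n _
        by_cases h : x ∈ intEmb d n +ᵥ Ch <;> simp [h]
      rw [hsum]
      have hind : (S + Ch).indicator (1 : ES d → ℝ≥0∞) x = 1 := by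
        simp [Set.indicator_of_mem hx]
      rw [hind, mul_one]
      -- injectivity into latt d C
      set J := I.filter (fun n => x ∈ intEmb d n +ᵥ Ch) with hJ
      rcases J.eq_empty_or_nonempty with hJe | ⟨n₀, hn₀⟩
      · simp [hJe]
      · have hmap : ∀ n ∈ J, n - n₀ ∈ hCfin.toFinset := by
          intro n hn
          rw [Set.Finite.mem_toFinset]
          have hxn : x - intEmb d n ∈ Ch := by
            have := (Finset.mem_filter.1 hn).2
            rw [Set.mem_vadd_set] at this
            obtain ⟨y, hy, hxy⟩ := this
            rw [vadd_eq_add] at hxy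
            have : x - intEmb d n = y := by rw [← hxy]; abel
            rwa [this]
          have hxn₀ : x - intEmb d n₀ ∈ Ch := by
            have := (Finset.mem_filter.1 hn₀).2
            rw [Set.mem_vadd_set] at this
            obtain ⟨y, hy, hxy⟩ := this
            rw [vadd_eq_add] at hxy
            have : x - intEmb d n₀ = y := by rw [← hxy]; abel
            rwa [this]
          have hneg : -(x - intEmb d n) ∈ Ch := by
            have h1 : Ch = -Ch := by
              rw [hCh, ← Set.smul_set_neg]
              rw [← hCsym]
            rw [h1]
            exact Set.neg_mem_neg.2 hxn
          have : intEmb d (n - n₀) ∈ Ch + Ch := by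
            rw [intEmb_sub]
            have : intEmb d n - intEmb d n₀ = (x - intEmb d n₀) + -(x - intEmb d n) := by abel
            rw [this]
            exact Set.add_mem_add hxn₀ hneg
          rw [hhalf] at this
          exact this
        have hinj : Set.InjOn (fun n => n - n₀) J := by
          intro a _ b _ hab
          simpa using sub_left_injective hab
        calc (J.card : ℝ≥0∞) = ((J.image (fun n => n - n₀)).card : ℝ≥0∞) := by
              rw [Finset.card_image_of_injOn hinj]
          _ ≤ (hCfin.toFinset.card : ℝ≥0∞) := by
              have : J.image (fun n => n - n₀) ⊆ hCfin.toFinset := by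
                intro m hm
                obtain ⟨n, hn, rfl⟩ := Finset.mem_image.1 hm
                exact hmap n hn
              exact_mod_cast Nat.cast_le.2 (Finset.card_le_card this)
          _ = NC := by
              have : hCfin.toFinset.card = (latt d C).ncard :=
                (Set.ncard_eq_toFinset_card _ hCfin).symm
              rw [this]
    · -- all indicators vanish
      have h0 : ∀ n ∈ I, (intEmb d n +ᵥ Ch).indicator (1 : ES d → ℝ≥0∞) x = 0 := by
        intro n hn
        apply Set.indicator_of_notMem
        intro hmem
        apply hx
        rw [Set.mem_vadd_set] at hmem
        obtain ⟨y, hy, hxy⟩ := hmem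
        rw [vadd_eq_add] at hxy
        rw [← hxy]
        exact Set.add_mem_add (by rw [hI, Set.Finite.mem_toFinset] at hn; exact hn) hy
      rw [Finset.sum_congr rfl h0]
      simp
  -- integrate
  have hL : ((latt d S).ncard : ℝ≥0∞) * volume Ch
      = ∫⁻ x, (∑ n ∈ I, (intEmb d n +ᵥ Ch).indicator (1 : ES d → ℝ≥0∞) x) := by
    rw [lintegral_finset_sum]
    · have : ∀ n ∈ I, (∫⁻ x, (intEmb d n +ᵥ Ch).indicator (1 : ES d → ℝ≥0∞) x) = volume Ch := by
        intro n _
        rw [lintegral_indicator_one (hChalf.const_vadd _)]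
        exact measure_vadd _ _ _
      rw [Finset.sum_congr rfl this, Finset.sum_const, nsmul_eq_mul]
      congr 1
      exact congrArg _ (Set.ncard_eq_toFinset_card _ hSfin)
    · intro n _
      exact (measurable_one).indicator (hChalf.const_vadd _)
  rw [hL]
  calc (∫⁻ x, (∑ n ∈ I, (intEmb d n +ᵥ Ch).indicator (1 : ES d → ℝ≥0∞) x))
      ≤ ∫⁻ x, (S + Ch).indicator (fun _ => NC) x := by
        apply lintegral_mono
        intro x
        dsimp only
        have h2 : (S + Ch).indicator (fun _ => NC) x = NC * (S + Ch).indicator 1 x := by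
          by_cases hx : x ∈ S + Ch <;> simp [hx]
        rw [h2]
        exact hpt x
    _ ≤ NC * volume (S + Ch) := lintegral_indicator_const_le _ _

/-- The ellipsoid family. -/
def Es (M : Matrix (Fin d) (Fin d) ℝ) (r : ℝ) : Set (ES d) :=
  {x | ‖Matrix.toEuclideanLin M x‖ ≤ r}

lemma toEuclideanLin_comp (A B : Matrix (Fin d) (Fin d) ℝ) (x : ES d) :
    Matrix.toEuclideanLin A (Matrix.toEuclideanLin B x) = Matrix.toEuclideanLin (A * B) x := by
  simp [Matrix.toEuclideanLin_apply, Matrix.mulVec_mulVec]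

lemma toEuclideanLin_one (x : ES d) : Matrix.toEuclideanLin (1 : Matrix (Fin d) (Fin d) ℝ) x = x := by
  simp [Matrix.toEuclideanLin_apply]

lemma det_toEuclideanLin (M : Matrix (Fin d) (Fin d) ℝ) :
    LinearMap.det (Matrix.toEuclideanLin M) = M.det := by
  rw [Matrix.toEuclideanLin_eq_toLin]
  exact LinearMap.det_toLin _ _

lemma Es_convex (M : Matrix (Fin d) (Fin d) ℝ) (r : ℝ) : Convex ℝ (Es M r) := by
  have : Es M r = Matrix.toEuclideanLin M ⁻¹' closedBall 0 r := by
    ext x; simp [Es, mem_closedBall_zero_iff]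
  rw [this]
  exact (convex_closedBall _ _).linear_preimage _

lemma Es_symm (M : Matrix (Fin d) (Fin d) ℝ) (r : ℝ) : Es M r = -(Es M r) := by
  ext x
  simp only [Set.mem_neg, Es, Set.mem_setOf_eq, map_neg, norm_neg]

lemma Es_closed (M : Matrix (Fin d) (Fin d) ℝ) (r : ℝ) : IsClosed (Es M r) := by
  have : Es M r = Matrix.toEuclideanLin M ⁻¹' closedBall 0 r := by
    ext x; simp [Es, mem_closedBall_zero_iff]
  rw [this]
  exact isClosed_closedBall.preimage (LinearMap.continuous_of_finiteDimensional _)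

lemma Es_zero_mem (M : Matrix (Fin d) (Fin d) ℝ) {r : ℝ} (hr : 0 ≤ r) : (0 : ES d) ∈ Es M r := by
  simp [Es, hr]

lemma Es_smul (M : Matrix (Fin d) (Fin d) ℝ) {a : ℝ} (ha : 0 < a) (r : ℝ) :
    a • Es M r = Es M (a * r) := by
  ext x
  rw [Set.mem_smul_set_iff_inv_smul_mem₀ (ne_of_gt ha)]
  simp only [Es, Set.mem_setOf_eq, _root_.map_smul, norm_smul, Real.norm_eq_abs,
    abs_of_pos (inv_pos.2 ha)]
  rw [inv_mul_le_iff₀ ha]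

lemma Es_add (M : Matrix (Fin d) (Fin d) ℝ) {r s : ℝ} (hr : 0 < r) (hs : 0 < s) :
    Es M r + Es M s = Es M (r + s) := by
  apply Set.Subset.antisymm
  · rintro _ ⟨x, hx, y, hy, rfl⟩
    simp only [Es, Set.mem_setOf_eq, map_add] at *
    calc ‖Matrix.toEuclideanLin M x + Matrix.toEuclideanLin M y‖
        ≤ ‖Matrix.toEuclideanLin M x‖ + ‖Matrix.toEuclideanLin M y‖ := norm_add_le _ _
      _ ≤ r + s := add_le_add hx hy
  · intro z hz
    have hrs : 0 < r + s := by linarith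
    refine ⟨(r / (r + s)) • z, ?_, (s / (r + s)) • z, ?_, ?_⟩
    · simp only [Es, Set.mem_setOf_eq, _root_.map_smul, norm_smul, Real.norm_eq_abs] at *
      rw [abs_of_pos (show (0:ℝ) < r / (r+s) by positivity)]
      calc r / (r + s) * ‖Matrix.toEuclideanLin M z‖ ≤ r / (r + s) * (r + s) := by
            apply mul_le_mul_of_nonneg_left hz (by positivity)
        _ = r := by field_simp
    · simp only [Es, Set.mem_setOf_eq, _root_.map_smul, norm_smul, Real.norm_eq_abs] at *
      rw [abs_of_pos (show (0:ℝ) < s / (r+s) by positivity)]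
      calc s / (r + s) * ‖Matrix.toEuclideanLin M z‖ ≤ s / (r + s) * (r + s) := by
            apply mul_le_mul_of_nonneg_left hz (by positivity)
        _ = s := by field_simp
    · show (r / (r + s)) • z + (s / (r + s)) • z = z
      rw [← add_smul]
      have : r / (r + s) + s / (r + s) = 1 := by field_simp
      rw [this, one_smul]

lemma Es_vol (M : Matrix (Fin d) (Fin d) ℝ) (hdet : M.det = 1) {r : ℝ} (hr : 0 ≤ r) :
    volume (Es M r) = ENNReal.ofReal (r ^ d) * volume (closedBall (0 : ES d) 1) := by
  have h1 : Es M r = Matrix.toEuclideanLin M ⁻¹' closedBall 0 r := by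
    ext x; simp [Es, mem_closedBall_zero_iff]
  rw [h1, Measure.addHaar_preimage_linearMap volume
    (by rw [det_toEuclideanLin, hdet]; norm_num)]
  rw [det_toEuclideanLin, hdet]
  rw [Measure.addHaar_closedBall' volume _ hr]
  simp [finrank_euclideanSpace_fin]

lemma Es_compact (M : Matrix (Fin d) (Fin d) ℝ) (hdet : IsUnit M.det) (r : ℝ) :
    IsCompact (Es M r) := by
  have hMM : M⁻¹ * M = 1 := Matrix.nonsing_inv_mul M (by simpa using hdet)
  have himg : Es M r = Matrix.toEuclideanLin M⁻¹ '' closedBall 0 r := by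
    ext x
    constructor
    · intro hx
      refine ⟨Matrix.toEuclideanLin M x, by simpa [Es, mem_closedBall_zero_iff] using hx, ?_⟩
      rw [toEuclideanLin_comp, hMM, toEuclideanLin_one]
    · rintro ⟨y, hy, rfl⟩
      simp only [Es, Set.mem_setOf_eq]
      rw [toEuclideanLin_comp]
      have hMM' : M * M⁻¹ = 1 := Matrix.mul_nonsing_inv M (by simpa using hdet)
      rw [hMM', toEuclideanLin_one]
      simpa [mem_closedBall_zero_iff] using hy
  rw [himg]
  exact (isCompact_closedBall _ _).image (LinearMap.continuous_of_finiteDimensional _)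

/-- The set appearing in `EllipsoidPFR` is the lattice points of a norm-ball of
`toEuclideanLin`. -/
lemma sqrt_set_eq (γ : Matrix (Fin d) (Fin d) ℝ) :
    {n : Fin d → ℤ | Real.sqrt (∑ i, (γ.mulVec (fun j => (n j : ℝ)) i) ^ 2) ≤ 1} =
      latt d (Es γ 1) := by
  ext n
  simp only [Set.mem_setOf_eq, latt, Es]
  have : ‖Matrix.toEuclideanLin γ (intEmb d n)‖
      = Real.sqrt (∑ i, (γ.mulVec (fun j => (n j : ℝ)) i) ^ 2) := by
    rw [EuclideanSpace.norm_eq]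
    congr 1
    apply Finset.sum_congr rfl
    intro i _
    rw [Real.norm_eq_abs, sq_abs]
    congr 1
  rw [this]

/-- Choice of a small thickening radius keeping the same lattice points. -/
lemma eps_choice {K₀ : Set (ES d)} (hcomp : IsCompact K₀) (hne : K₀.Nonempty)
    (P : Set (Fin d → ℤ)) (hP : latt d K₀ ⊆ P) :
    ∃ ε : ℝ, 0 < ε ∧ ε ≤ 1 ∧ latt d (K₀ + closedBall 0 ε) ⊆ P := by
  classical
  have hDfin : (latt d (K₀ + closedBall 0 1)).Finite := by
    have : Bornology.IsBounded (K₀ + closedBall (0:ES d) 1) :=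
      hcomp.isBounded.add isBounded_closedBall
    exact latt_finite this
  set Dbad : Finset (Fin d → ℤ) := (hDfin.subset (Set.diff_subset)).toFinset
    (s := latt d (K₀ + closedBall 0 1) \ P) with hDbad
  have hbadpos : ∀ n ∈ Dbad, 0 < infDist (intEmb d n) K₀ := by
    intro n hn
    rw [hDbad, Set.Finite.mem_toFinset] at hn
    have hnot : intEmb d n ∉ K₀ := fun hmem => hn.2 (hP hmem)
    exact (hcomp.isClosed.notMem_iff_infDist_pos hne).1 hnot
  -- choose epsilon
  obtain ⟨ε, hε0, hε1, hεlt⟩ : ∃ ε : ℝ, 0 < ε ∧ ε ≤ 1 ∧ ∀ n ∈ Dbad, ε < infDist (intEmb d n) K₀ := by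
    rcases Dbad.eq_empty_or_nonempty with he | hne'
    · exact ⟨1, one_pos, le_refl _, by simp [he]⟩
    · refine ⟨min 1 ((Dbad.inf' hne' fun n => infDist (intEmb d n) K₀) / 2), ?_, min_le_left _ _, ?_⟩
      · have : 0 < Dbad.inf' hne' fun n => infDist (intEmb d n) K₀ := by
          rw [Finset.lt_inf'_iff]
          exact hbadpos
        positivity
      · intro n hn
        have h1 : (Dbad.inf' hne' fun n => infDist (intEmb d n) K₀) ≤ infDist (intEmb d n) K₀ :=
          Finset.inf'_le _ hn
        have h2 : 0 < Dbad.inf' hne' fun n => infDist (intEmb d n) K₀ := by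
          rw [Finset.lt_inf'_iff]; exact hbadpos
        calc min 1 ((Dbad.inf' hne' fun n => infDist (intEmb d n) K₀) / 2)
            ≤ (Dbad.inf' hne' fun n => infDist (intEmb d n) K₀) / 2 := min_le_right _ _
          _ < Dbad.inf' hne' fun n => infDist (intEmb d n) K₀ := by linarith
          _ ≤ _ := h1
  refine ⟨ε, hε0, hε1, ?_⟩
  intro n hn
  by_contra hnP
  obtain ⟨y, hy, z, hz, hyz⟩ := hn
  have hD : n ∈ latt d (K₀ + closedBall 0 1) := by
    show intEmb d n ∈ K₀ + closedBall 0 1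
    rw [← hyz]
    exact Set.add_mem_add hy (closedBall_subset_closedBall hε1 hz)
  have hnbad : n ∈ Dbad := by
    rw [hDbad, Set.Finite.mem_toFinset]
    exact ⟨hD, hnP⟩
  have hlt := hεlt n hnbad
  have : infDist (intEmb d n) K₀ ≤ ε := by
    have hdist : dist (intEmb d n) y ≤ ε := by
      rw [← hyz]
      rw [mem_closedBall_zero_iff] at hz
      simp [dist_eq_norm]
      simpa using hz
    exact (infDist_le_dist_of_mem hy).trans hdist
  linarith

lemma image_add_linear (f : ES d →ₗ[ℝ] ES d) (A B : Set (ES d)) :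
    f '' (A + B) = f '' A + f '' B := by
  ext y
  constructor
  · rintro ⟨x, ⟨a, ha, b, hb, rfl⟩, rfl⟩
    exact ⟨f a, ⟨a, ha, rfl⟩, f b, ⟨b, hb, rfl⟩, (map_add f a b).symm⟩
  · rintro ⟨-, ⟨a, ha, rfl⟩, -, ⟨b, hb, rfl⟩, rfl⟩
    exact ⟨a + b, ⟨a, ha, b, hb, rfl⟩, map_add f a b⟩

lemma image_smul_linear (f : ES d →ₗ[ℝ] ES d) (a : ℝ) (A : Set (ES d)) :
    f '' (a • A) = a • (f '' A) := by
  ext y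
  constructor
  · rintro ⟨x, ⟨b, hb, rfl⟩, rfl⟩
    exact ⟨f b, ⟨b, hb, rfl⟩, (map_smul f a b).symm⟩
  · rintro ⟨-, ⟨b, hb, rfl⟩, rfl⟩
    exact ⟨a • b, ⟨b, hb, rfl⟩, map_smul f a b⟩

lemma pow_step (hd : 0 < d) (X V : ℝ≥0∞) {a : ℝ} (ha : 0 < a)
    (h : X ^ ((1:ℝ)/d) ≤ ENNReal.ofReal a * V ^ ((1:ℝ)/d)) :
    X ≤ ENNReal.ofReal (a ^ d) * V := by
  have hd' : (d : ℝ) ≠ 0 := Nat.cast_ne_zero.2 hd.ne'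
  have h2 := ENNReal.rpow_le_rpow h (le_of_lt (show (0:ℝ) < d from Nat.cast_pos.2 hd))
  rw [ENNReal.mul_rpow_of_nonneg _ _ (by positivity), ← ENNReal.rpow_mul,
    ← ENNReal.rpow_mul, one_div_mul_cancel hd', ENNReal.rpow_one, ENNReal.rpow_one] at h2
  calc X ≤ ENNReal.ofReal a ^ (d:ℝ) * V := h2
    _ = ENNReal.ofReal (a ^ d) * V := by
        rw [ENNReal.ofReal_rpow_of_pos ha, Real.rpow_natCast]

theorem key {c : ℝ} (hc : 1 ≤ c) (hMil : MilmanRBM c) (hd : 0 < d)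
    (B : Set (ES d)) (hBconv : Convex ℝ B)
    (hBint : (interior B).Nonempty) (hBsym : B = -B) (hfin : (latt d B).Finite) :
    ∃ (γ : Matrix (Fin d) (Fin d) ℝ) (F : Set (Fin d → ℤ)),
      IsUnit γ.det ∧
      (latt d (Es γ 1)).Finite ∧
      ((latt d (Es γ 1)).ncard : ℝ) ≤ (5*c)^d * (latt d B).ncard ∧
      F.Finite ∧ ((F.ncard : ℝ) ≤ (5*c)^d) ∧
      latt d B ⊆ F + latt d (Es γ 1) := by
  classical
  set P := latt d B with hP
  -- basic sets
  have hmemP : ∀ {n}, n ∈ P → intEmb d n ∈ B := fun h => h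
  have hPsym : ∀ n ∈ P, -n ∈ P := by
    intro n hn
    show intEmb d (-n) ∈ B
    rw [intEmb_neg, hBsym]
    exact Set.neg_mem_neg.2 hn
  have h0B : (0 : ES d) ∈ B := by
    obtain ⟨x, hx⟩ := hBint
    have hxB : x ∈ B := interior_subset hx
    have hxB' : -x ∈ B := by rw [hBsym]; exact Set.neg_mem_neg.2 hxB
    have := hBconv hxB hxB' (by norm_num : (0:ℝ) ≤ 1/2) (by norm_num : (0:ℝ) ≤ 1/2) (by norm_num)
    simpa using this
  have h0P : 0 ∈ P := by
    show intEmb d 0 ∈ B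
    rw [intEmb_zero]; exact h0B
  set Q : Set (ES d) := intEmb d '' P with hQ
  have hQfin : Q.Finite := hfin.image _
  set K₀ := convexHull ℝ Q with hK₀
  have hK₀B : K₀ ⊆ B := convexHull_min (by rintro - ⟨n, hn, rfl⟩; exact hn) hBconv
  have hK₀comp : IsCompact K₀ := hQfin.isCompact_convexHull ℝ
  have hK₀conv : Convex ℝ K₀ := convex_convexHull _ _
  have h0K₀ : (0 : ES d) ∈ K₀ := subset_convexHull _ _ ⟨0, h0P, intEmb_zero⟩
  have hK₀ne : K₀.Nonempty := ⟨0, h0K₀⟩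
  have hQsym : -Q = Q := by
    rw [hQ]
    ext x
    simp only [Set.mem_neg, Set.mem_image]
    constructor
    · rintro ⟨n, hn, h⟩
      exact ⟨-n, hPsym n hn, by rw [intEmb_neg, h, neg_neg]⟩
    · rintro ⟨n, hn, rfl⟩
      exact ⟨-n, hPsym n hn, by rw [intEmb_neg]⟩
  have hK₀sym : K₀ = -K₀ := by
    rw [hK₀, ← convexHull_neg, hQsym]
  obtain ⟨ε, hε0, hε1, hεP⟩ := eps_choice hK₀comp hK₀ne P (fun n hn => hK₀B hn)
  set H := K₀ + closedBall 0 ε with hH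
  have hHcomp : IsCompact H := hK₀comp.add (isCompact_closedBall _ _)
  have hHconv : Convex ℝ H := hK₀conv.add (convex_closedBall _ _)
  have hHneg : ∀ x ∈ H, -x ∈ H := by
    rintro - ⟨y, hy, z, hz, rfl⟩
    rw [neg_add]
    refine Set.add_mem_add ?_ ?_
    · have : -y ∈ -K₀ := Set.neg_mem_neg.2 hy
      rwa [← hK₀sym] at this
    · rw [mem_closedBall_zero_iff] at *
      simpa using hz
  have hHsym : H = -H := by
    ext x
    rw [Set.mem_neg]
    constructor
    · intro hx
      have := hHneg x hx
      exact this
    · intro hx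
      have := hHneg _ hx
      rwa [neg_neg] at this
  -- interior of H is nonempty
  have hHint : (interior H).Nonempty := by
    have hball : ball (0 : ES d) ε ⊆ H := by
      intro z hz
      refine ⟨0, h0K₀, z, ball_subset_closedBall hz, by simp⟩
    exact ⟨0, isOpen_ball.subset_interior_iff.2 hball (mem_ball_self hε0)⟩
  -- lattice points of H are exactly P
  have hHlatt : latt d H = P := by
    apply Set.Subset.antisymm hεP
    intro n hn
    show intEmb d n ∈ H
    refine ⟨intEmb d n, subset_convexHull _ _ ⟨n, hn, rfl⟩, 0, ?_, by simp⟩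
    simp [hε0.le]
  have hHfin : (latt d H).Finite := by rw [hHlatt]; exact hfin
  -- volumes
  set V := volume H with hV
  have hV0 : V ≠ 0 := by
    have h1 : (0:ℝ≥0∞) < volume (interior H) := by
      obtain ⟨x, hx⟩ := hHint
      exact isOpen_interior.measure_pos volume ⟨x, hx⟩
    exact ((h1.trans_le (measure_mono interior_subset))).ne'
  have hVtop : V ≠ ⊤ := hHcomp.measure_lt_top.ne
  set v := volume (closedBall (0 : ES d) 1) with hv
  have hv0 : v ≠ 0 := by
    have : (0:ℝ≥0∞) < volume (ball (0:ES d) 1) := measure_ball_pos volume 0 one_pos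
    exact (this.trans_le (measure_mono ball_subset_closedBall)).ne'
  have hvtop : v ≠ ⊤ := (isCompact_closedBall _ _).measure_lt_top.ne
  -- Milman
  obtain ⟨γ₁, γ₂, hmil⟩ := hMil d hd H (closedBall 0 1) hHcomp hHconv hHint
    (isCompact_closedBall _ _) (convex_closedBall _ _)
    (by rw [interior_closedBall (0:ES d) one_ne_zero]; exact ⟨0, mem_ball_self one_pos⟩)
  set M := ((γ₂⁻¹ : Matrix.SpecialLinearGroup (Fin d) ℝ) : Matrix (Fin d) (Fin d) ℝ) *
    ((γ₁ : Matrix (Fin d) (Fin d) ℝ)) with hM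
  have hdetM : M.det = 1 := by
    rw [hM, Matrix.det_mul, Matrix.SpecialLinearGroup.det_coe, Matrix.SpecialLinearGroup.det_coe,
      one_mul]
  have hdetMunit : IsUnit M.det := by rw [hdetM]; exact isUnit_one
  -- the normalizing radius
  set t₀ : ℝ := (V.toReal / v.toReal) ^ ((1:ℝ)/d) with ht₀def
  have hVv : 0 < V.toReal / v.toReal := by
    apply div_pos
    · exact ENNReal.toReal_pos hV0 hVtop
    · exact ENNReal.toReal_pos hv0 hvtop
  have ht₀ : 0 < t₀ := Real.rpow_pos_of_pos hVv _
  have hdne : (d : ℝ) ≠ 0 := Nat.cast_ne_zero.2 hd.ne'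
  have ht₀d : t₀ ^ d = V.toReal / v.toReal := by
    rw [ht₀def, ← Real.rpow_natCast ((V.toReal / v.toReal) ^ ((1:ℝ)/d)) d,
      ← Real.rpow_mul hVv.le, one_div_mul_cancel hdne, Real.rpow_one]
  have hVeq : ENNReal.ofReal (t₀ ^ d) * v = V := by
    rw [ht₀d, ENNReal.ofReal_div_of_pos (ENNReal.toReal_pos hv0 hvtop),
      ENNReal.ofReal_toReal hVtop, ENNReal.ofReal_toReal hvtop]
    exact ENNReal.div_mul_cancel hv0 hvtop
  -- volume of the ellipsoids in terms of V
  have hEsV : ∀ s : ℝ, 0 < s → volume (Es M (s * t₀)) = ENNReal.ofReal (s ^ d) * V := by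
    intro s hs
    rw [Es_vol M hdetM (by positivity), ← hv, mul_pow,
      ENNReal.ofReal_mul (by positivity), mul_assoc, hVeq]
  -- linear maps
  set G1 := Matrix.toEuclideanLin ((γ₁ : Matrix (Fin d) (Fin d) ℝ)) with hG1
  set G2 := Matrix.toEuclideanLin ((γ₂ : Matrix (Fin d) (Fin d) ℝ)) with hG2
  set N2 := Matrix.toEuclideanLin
    ((γ₂⁻¹ : Matrix.SpecialLinearGroup (Fin d) ℝ) : Matrix (Fin d) (Fin d) ℝ) with hN2
  set G1i := Matrix.toEuclideanLin
    ((γ₁⁻¹ : Matrix.SpecialLinearGroup (Fin d) ℝ) : Matrix (Fin d) (Fin d) ℝ) with hG1i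
  have hN2G2 : ∀ x, N2 (G2 x) = x := by
    intro x
    rw [hN2, hG2, toEuclideanLin_comp]
    have h1 : ((γ₂⁻¹ : Matrix.SpecialLinearGroup (Fin d) ℝ) : Matrix (Fin d) (Fin d) ℝ) *
        ((γ₂ : Matrix (Fin d) (Fin d) ℝ)) = 1 := by
      rw [← Matrix.SpecialLinearGroup.coe_mul, inv_mul_cancel, Matrix.SpecialLinearGroup.coe_one]
    rw [h1, toEuclideanLin_one]
  have hG2N2 : ∀ x, G2 (N2 x) = x := by
    intro x
    rw [hN2, hG2, toEuclideanLin_comp]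
    have h1 : ((γ₂ : Matrix (Fin d) (Fin d) ℝ)) *
        ((γ₂⁻¹ : Matrix.SpecialLinearGroup (Fin d) ℝ) : Matrix (Fin d) (Fin d) ℝ) = 1 := by
      rw [← Matrix.SpecialLinearGroup.coe_mul, mul_inv_cancel, Matrix.SpecialLinearGroup.coe_one]
    rw [h1, toEuclideanLin_one]
  have hG1G1i : ∀ x, G1 (G1i x) = x := by
    intro x
    rw [hG1i, hG1, toEuclideanLin_comp]
    have h1 : ((γ₁ : Matrix (Fin d) (Fin d) ℝ)) *
        ((γ₁⁻¹ : Matrix.SpecialLinearGroup (Fin d) ℝ) : Matrix (Fin d) (Fin d) ℝ) = 1 := by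
      rw [← Matrix.SpecialLinearGroup.coe_mul, mul_inv_cancel, Matrix.SpecialLinearGroup.coe_one]
    rw [h1, toEuclideanLin_one]
  have hMx : ∀ x, Matrix.toEuclideanLin M x = N2 (G1 x) := by
    intro x
    rw [hM, hN2, hG1, toEuclideanLin_comp]
  -- image of the ellipsoid under G1
  have hG1Es : ∀ r : ℝ, ⇑G1 '' Es M r = ⇑G2 '' closedBall 0 r := by
    intro r
    ext y
    constructor
    · rintro ⟨x, hx, rfl⟩
      refine ⟨N2 (G1 x), ?_, hG2N2 _⟩
      rw [mem_closedBall_zero_iff]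
      have hx' : ‖Matrix.toEuclideanLin M x‖ ≤ r := hx
      rwa [hMx] at hx'
    · rintro ⟨z, hz, rfl⟩
      refine ⟨G1i (G2 z), ?_, hG1G1i _⟩
      show ‖Matrix.toEuclideanLin M (G1i (G2 z))‖ ≤ r
      rw [hMx, hG1G1i, hN2G2]
      rwa [mem_closedBall_zero_iff] at hz
  have hG1EsSmul : ∀ s : ℝ, 0 < s → ⇑G1 '' Es M (s * t₀) = (s*t₀) • (⇑G2 '' closedBall 0 1) := by
    intro s hs
    rw [hG1Es (s * t₀), ← image_smul_linear, smul_unitClosedBall]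
    congr 2
    rw [Real.norm_eq_abs, abs_of_pos (by positivity)]
  -- Milman's bound on all the Minkowski sums we need
  have hvolsum : ∀ t s : ℝ, 0 < t → 0 < s →
      volume (t • H + Es M (s * t₀)) ≤ ENNReal.ofReal ((c*(t+s))^d) * V := by
    intro t s ht hs
    have hdet1 : LinearMap.det G1 = 1 := by
      rw [hG1, det_toEuclideanLin, Matrix.SpecialLinearGroup.det_coe]
    have himg : volume (⇑G1 '' (t • H + Es M (s*t₀))) = volume (t • H + Es M (s*t₀)) := by
      rw [Measure.addHaar_image_linearMap, hdet1]
      simp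
    rw [← himg, image_add_linear, image_smul_linear, hG1EsSmul s hs]
    have hmil2 := hmil t (s*t₀) ht (by positivity)
    -- massage RHS of hmil2
    have ht₀pow : (t₀ ^ d : ℝ) ^ ((1:ℝ)/d) = t₀ := by
      rw [← Real.rpow_natCast t₀ d, ← Real.rpow_mul ht₀.le, mul_one_div,
        div_self hdne, Real.rpow_one]
    have hv1d : ENNReal.ofReal t₀ * v ^ ((1:ℝ)/d) = V ^ ((1:ℝ)/d) := by
      rw [← hVeq, ENNReal.mul_rpow_of_nonneg _ _ (by positivity)]
      congr 1
      rw [ENNReal.ofReal_rpow_of_pos (by positivity), ht₀pow]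
    have hrhs : ENNReal.ofReal c * (ENNReal.ofReal t * V ^ ((1:ℝ)/d) +
        ENNReal.ofReal (s*t₀) * v ^ ((1:ℝ)/d)) = ENNReal.ofReal (c*(t+s)) * V ^ ((1:ℝ)/d) := by
      rw [ENNReal.ofReal_mul hs.le, mul_assoc, hv1d, ← add_mul, ← ENNReal.ofReal_add ht.le hs.le,
        ← mul_assoc, ← ENNReal.ofReal_mul (by positivity)]
    rw [hrhs] at hmil2
    exact pow_step hd _ _ (by positivity) hmil2
  -- finiteness of ellipsoid lattice points
  have hEsfin : ∀ r : ℝ, (latt d (Es M r)).Finite :=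
    fun r => latt_finite (Es_compact M hdetMunit r).isBounded
  have hHEsfin : (latt d (H + Es M t₀)).Finite :=
    latt_finite ((hHcomp.add (Es_compact M hdetMunit t₀)).isBounded)
  -- auxiliary comparison of volumes used twice
  have hratio : ∀ S : Set (ES d), volume S ≤ ENNReal.ofReal ((c*(5/2:ℝ))^d) * V →
      volume S ≤ ENNReal.ofReal ((5*c)^d) * (ENNReal.ofReal ((2⁻¹:ℝ)^d) * V) := by
    intro S h1
    apply h1.trans
    rw [← mul_assoc, ← ENNReal.ofReal_mul (by positivity)]
    apply mul_le_mul_left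
    apply ENNReal.ofReal_le_ofReal
    rw [← mul_pow]
    apply pow_le_pow_left₀ (by positivity)
    linarith
  have hcancel : ∀ (NS NC : ℕ), ((NS : ℝ≥0∞)) * (ENNReal.ofReal ((2⁻¹:ℝ)^d) * V) ≤
      ((NC : ℝ≥0∞)) * (ENNReal.ofReal ((5*c)^d) * (ENNReal.ofReal ((2⁻¹:ℝ)^d) * V)) →
      ((NS : ℝ) ≤ (5*c)^d * (NC : ℝ)) := by
    intro NS NC h
    have ha0 : (ENNReal.ofReal ((2⁻¹:ℝ)^d) * V) ≠ 0 := by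
      apply mul_ne_zero _ hV0
      simp only [ne_eq, ENNReal.ofReal_eq_zero, not_le]
      positivity
    have hatop : (ENNReal.ofReal ((2⁻¹:ℝ)^d) * V) ≠ ⊤ :=
      ENNReal.mul_ne_top ENNReal.ofReal_ne_top hVtop
    have h2 : ((NS : ℝ≥0∞)) ≤ (NC : ℝ≥0∞) * ENNReal.ofReal ((5*c)^d) := by
      have h3 : ((NS : ℝ≥0∞)) * (ENNReal.ofReal ((2⁻¹:ℝ)^d) * V) ≤
          ((NC : ℝ≥0∞) * ENNReal.ofReal ((5*c)^d)) * (ENNReal.ofReal ((2⁻¹:ℝ)^d) * V) := by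
        calc ((NS : ℝ≥0∞)) * (ENNReal.ofReal ((2⁻¹:ℝ)^d) * V) ≤ _ := h
          _ = ((NC : ℝ≥0∞) * ENNReal.ofReal ((5*c)^d)) * (ENNReal.ofReal ((2⁻¹:ℝ)^d) * V) := by
            ring
      exact (ENNReal.mul_le_mul_iff_left ha0 hatop).1 h3
    have h4 := ENNReal.toReal_mono (by
      exact ENNReal.mul_ne_top (ENNReal.natCast_ne_top NC) ENNReal.ofReal_ne_top) h2
    rw [ENNReal.toReal_mul, ENNReal.toReal_natCast, ENNReal.toReal_natCast,
      ENNReal.toReal_ofReal (by positivity)] at h4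
    linarith
  -- first count: |latt (H + E)| ≤ (5c)^d |latt E|
  have count1 : ((latt d (H + Es M t₀)).ncard : ℝ) ≤ (5*c)^d * ((latt d (Es M t₀)).ncard : ℝ) := by
    have hcc := cover_count (H + Es M t₀) (Es M t₀) (Es_convex M t₀) (Es_symm M t₀)
      (by rw [Es_smul M (by norm_num : (0:ℝ) < 2⁻¹)]; exact (Es_closed M _).measurableSet)
      hHEsfin (hEsfin t₀)
    rw [Es_smul M (by norm_num : (0:ℝ) < 2⁻¹)] at hcc
    have hsum : H + Es M t₀ + Es M (2⁻¹ * t₀) = H + Es M ((5/2-1) * t₀) := by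
      rw [add_assoc, Es_add M (by positivity) (by positivity)]
      ring_nf
    rw [hsum] at hcc
    have hEhalf : volume (Es M (2⁻¹ * t₀)) = ENNReal.ofReal ((2⁻¹:ℝ)^d) * V :=
      hEsV 2⁻¹ (by norm_num)
    have hb : volume (H + Es M ((5/2-1) * t₀)) ≤
        ENNReal.ofReal ((5*c)^d) * (ENNReal.ofReal ((2⁻¹:ℝ)^d) * V) := by
      apply hratio
      have := hvolsum 1 (5/2-1) one_pos (by norm_num)
      rw [one_smul] at this
      apply this.trans
      apply mul_le_mul_left
      apply ENNReal.ofReal_le_ofReal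
      apply pow_le_pow_left₀ (by positivity)
      linarith
    apply hcancel
    rw [← hEhalf]
    apply hcc.trans
    apply mul_le_mul_right
    rw [← hEhalf] at hb
    exact hb
  -- second count: |latt (2E)| ≤ (5c)^d |P|
  have count2 : ((latt d (Es M (2*t₀))).ncard : ℝ) ≤ (5*c)^d * ((latt d B).ncard : ℝ) := by
    have hcc := cover_count (Es M (2*t₀)) H hHconv hHsym
      ((hHcomp.smul (2⁻¹:ℝ)).isClosed.measurableSet)
      (hEsfin (2*t₀)) hHfin
    have hHhalf : volume ((2⁻¹:ℝ) • H) = ENNReal.ofReal ((2⁻¹:ℝ)^d) * V := by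
      rw [Measure.addHaar_smul, finrank_euclideanSpace_fin, abs_of_pos (by positivity), hV]
    have hb : volume (Es M (2*t₀) + (2⁻¹:ℝ) • H) ≤
        ENNReal.ofReal ((5*c)^d) * (ENNReal.ofReal ((2⁻¹:ℝ)^d) * V) := by
      apply hratio
      have := hvolsum 2⁻¹ 2 (by norm_num) (by norm_num)
      rw [add_comm (Es M (2*t₀))]
      apply this.trans
      apply mul_le_mul_left
      apply ENNReal.ofReal_le_ofReal
      apply pow_le_pow_left₀ (by positivity)
      linarith
    have := hcancel (latt d (Es M (2*t₀))).ncard (latt d H).ncard (by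
      rw [← hHhalf]
      apply hcc.trans
      apply mul_le_mul_right
      rw [← hHhalf] at hb
      exact hb)
    rwa [hHlatt] at this
  -- Ruzsa covering
  set T := latt d (Es M t₀) with hT
  have hTfin : T.Finite := hEsfin t₀
  have hTne : (hTfin.toFinset).Nonempty := by
    refine ⟨0, ?_⟩
    rw [Set.Finite.mem_toFinset]
    show intEmb d 0 ∈ Es M t₀
    rw [intEmb_zero]
    exact Es_zero_mem M ht₀.le
  have hPT : hfin.toFinset + hTfin.toFinset ⊆ hHEsfin.toFinset := by
    intro n hn
    rw [Finset.mem_add] at hn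
    obtain ⟨p, hp, t, ht', rfl⟩ := hn
    rw [Set.Finite.mem_toFinset] at hp ht' ⊢
    show intEmb d (p + t) ∈ H + Es M t₀
    rw [intEmb_add]
    refine Set.add_mem_add ?_ ht'
    exact ⟨intEmb d p, subset_convexHull _ _ ⟨p, hp, rfl⟩, 0, by simp [hε0.le], by simp⟩
  have hcard : ((hfin.toFinset + hTfin.toFinset).card : ℝ) ≤ (5*c)^d * (hTfin.toFinset.card : ℝ) := by
    calc ((hfin.toFinset + hTfin.toFinset).card : ℝ) ≤ (hHEsfin.toFinset.card : ℝ) := by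
          exact_mod_cast Finset.card_le_card hPT
      _ = ((latt d (H + Es M t₀)).ncard : ℝ) := by
          rw [Set.ncard_eq_toFinset_card _ hHEsfin]
      _ ≤ (5*c)^d * ((latt d (Es M t₀)).ncard : ℝ) := count1
      _ = (5*c)^d * (hTfin.toFinset.card : ℝ) := by
          rw [Set.ncard_eq_toFinset_card _ hTfin]
  obtain ⟨F, hFsub, hFcard, hFcover⟩ := Finset.ruzsa_covering_add hTne hcard
  have hsub2 : ((hTfin.toFinset - hTfin.toFinset : Finset (Fin d → ℤ)) : Set (Fin d → ℤ)) ⊆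
      latt d (Es M (2*t₀)) := by
    intro m hm
    rw [Finset.coe_sub] at hm
    obtain ⟨x, hx, y, hy, rfl⟩ := hm
    rw [Set.Finite.coe_toFinset] at hx hy
    show intEmb d (x - y) ∈ Es M (2*t₀)
    have hx' : ‖Matrix.toEuclideanLin M (intEmb d x)‖ ≤ t₀ := hx
    have hy' : ‖Matrix.toEuclideanLin M (intEmb d y)‖ ≤ t₀ := hy
    show ‖Matrix.toEuclideanLin M (intEmb d (x - y))‖ ≤ 2*t₀
    rw [intEmb_sub, map_sub]
    calc ‖Matrix.toEuclideanLin M (intEmb d x) - Matrix.toEuclideanLin M (intEmb d y)‖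
        ≤ ‖Matrix.toEuclideanLin M (intEmb d x)‖ + ‖Matrix.toEuclideanLin M (intEmb d y)‖ :=
          norm_sub_le _ _
      _ ≤ t₀ + t₀ := add_le_add hx' hy'
      _ = 2*t₀ := by ring
  have hfinalsub : P ⊆ (F : Set (Fin d → ℤ)) + latt d (Es M (2*t₀)) := by
    intro p hp
    have hp' : p ∈ F + (hTfin.toFinset - hTfin.toFinset) := hFcover (hfin.mem_toFinset.2 hp)
    rw [Finset.mem_add] at hp'
    obtain ⟨f, hf, m, hm, rfl⟩ := hp'
    exact Set.add_mem_add (Finset.mem_coe.2 hf) (hsub2 (Finset.mem_coe.2 hm))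
  -- final γ
  have hEsγ : Es ((2*t₀)⁻¹ • M) 1 = Es M (2*t₀) := by
    ext x
    show ‖Matrix.toEuclideanLin ((2*t₀)⁻¹ • M) x‖ ≤ 1 ↔ ‖Matrix.toEuclideanLin M x‖ ≤ 2*t₀
    have heq : Matrix.toEuclideanLin ((2*t₀)⁻¹ • M) x = (2*t₀)⁻¹ • Matrix.toEuclideanLin M x := by
      rw [_root_.map_smul]
      rfl
    rw [heq, norm_smul, Real.norm_eq_abs, abs_of_pos (by positivity), inv_mul_le_iff₀ (by positivity), mul_one]
  refine ⟨(2*t₀)⁻¹ • M, (F : Set (Fin d → ℤ)), ?_, ?_, ?_, F.finite_toSet, ?_, ?_⟩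
  · rw [Matrix.det_smul, hdetM, mul_one]
    apply IsUnit.pow
    simp only [isUnit_iff_ne_zero, ne_eq, inv_eq_zero]
    positivity
  · rw [hEsγ]; exact hEsfin (2*t₀)
  · rw [hEsγ]; exact count2
  · rw [Set.ncard_coe_finset]; exact hFcard
  · rw [hEsγ]; exact hfinalsub

/-- The final constant. -/
noncomputable def Cfin (C c : ℝ) : ℝ :=
  C * 2 ^ (C * Real.log (5*c)) + C + C * Real.log (5*c) + 1

lemma Cfin_props {C c : ℝ} (hC : 1 ≤ C) (hc : 1 ≤ c) :
    1 ≤ Cfin C c ∧ C ≤ Cfin C c ∧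
    C * 2 ^ (C * Real.log (5*c)) ≤ Cfin C c ∧
    C * Real.log (5*c) + C ≤ Cfin C c := by
  have hN0 : 0 ≤ C * Real.log (5*c) :=
    mul_nonneg (by linarith) (Real.log_nonneg (by linarith))
  have h2N : (0:ℝ) < 2 ^ (C * Real.log (5*c)) := Real.rpow_pos_of_pos (by norm_num) _
  unfold Cfin
  refine ⟨by nlinarith, by nlinarith, by nlinarith, by nlinarith⟩

lemma main {G : Type} [AddCommGroup G] {C c : ℝ} (hC : 1 ≤ C) (hc : 1 ≤ c)
    (hconv : ConvexPFR C G) (hMil : MilmanRBM c) : EllipsoidPFR (Cfin C c) G := by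
  intro K A hK hAfin hAne hdbl
  obtain ⟨d, B, a₀, a, X, hdlog, hBcomp, hBconv, hBint, hBsym, hfin, hcount, hXfin, hXcard,
    hcover⟩ := hconv K A hK hAfin hAne hdbl
  obtain ⟨hCfin1, hCfin2, hCfin3, hCfin4⟩ := Cfin_props hC hc
  have hKpos : (0:ℝ) < K := by linarith
  have hlog2K : 0 ≤ Real.log (2*K) := Real.log_nonneg (by linarith)
  have hN0 : 0 ≤ C * Real.log (5*c) :=
    mul_nonneg (by linarith) (Real.log_nonneg (by linarith))
  have hKC1 : (1:ℝ) ≤ K ^ C := Real.one_le_rpow hK (by linarith)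
  have hKCfin1 : (1:ℝ) ≤ K ^ Cfin C c := Real.one_le_rpow hK (by linarith)
  have hKmono : K ^ C ≤ K ^ Cfin C c := Real.rpow_le_rpow_of_exponent_le hK hCfin2
  have hA1 : (1:ℝ) ≤ A.ncard := by
    have := (Set.ncard_pos hAfin).2 hAne
    exact_mod_cast this
  -- the exponential bound
  have h5cd : ((5*c:ℝ))^d ≤ 2 ^ (C * Real.log (5*c)) * K ^ (C * Real.log (5*c)) := by
    have h5c1 : (1:ℝ) ≤ 5*c := by linarith
    have h5c0 : (0:ℝ) < 5*c := by linarith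
    calc ((5*c:ℝ))^d = (5*c) ^ (d:ℝ) := (Real.rpow_natCast _ d).symm
      _ ≤ (5*c) ^ (C * Real.log (2*K)) := Real.rpow_le_rpow_of_exponent_le h5c1 hdlog
      _ = (2*K) ^ (C * Real.log (5*c)) := by
          rw [Real.rpow_def_of_pos h5c0, Real.rpow_def_of_pos (by linarith : (0:ℝ) < 2*K)]
          congr 1
          ring
      _ = 2 ^ (C * Real.log (5*c)) * K ^ (C * Real.log (5*c)) := by
          rw [Real.mul_rpow (by norm_num) hKpos.le]
  have h5cd0 : (0:ℝ) ≤ (5*c)^d := by positivity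
  -- the key product bound
  have hprod : ((5*c:ℝ))^d * (C * K ^ C) ≤ Cfin C c * K ^ Cfin C c := by
    have h1 : ((5*c:ℝ))^d * (C * K ^ C) ≤
        (2 ^ (C * Real.log (5*c)) * K ^ (C * Real.log (5*c))) * (C * K ^ C) := by
      apply mul_le_mul_of_nonneg_right h5cd
      positivity
    apply h1.trans
    have h2 : (2 ^ (C * Real.log (5*c)) * K ^ (C * Real.log (5*c))) * (C * K ^ C)
        = (C * 2 ^ (C * Real.log (5*c))) * K ^ (C * Real.log (5*c) + C) := by
      rw [Real.rpow_add hKpos]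
      ring
    rw [h2]
    apply mul_le_mul hCfin3 (Real.rpow_le_rpow_of_exponent_le hK hCfin4) (by positivity)
      (by linarith)
  rcases Nat.eq_zero_or_pos d with hd0 | hd
  · -- degenerate case : d = 0
    subst hd0
    haveI : Unique (Fin 0 → ℤ) := by infer_instance
    refine ⟨0, 1, a₀, a, X, ?_, ?_, ?_, ?_, hXfin, ?_, ?_⟩
    · simpa using mul_nonneg (by linarith : (0:ℝ) ≤ Cfin C c) hlog2K
    · rw [Matrix.det_one]; exact isUnit_one
    · apply Set.Finite.subset (Set.finite_univ) (Set.subset_univ _)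
    · have huniv : {n : Fin 0 → ℤ |
          Real.sqrt (∑ i, ((1 : Matrix (Fin 0) (Fin 0) ℝ).mulVec (fun j => (n j : ℝ)) i) ^ 2)
            ≤ 1} = Set.univ := by
        ext n
        simp
      rw [huniv, Set.ncard_univ, Nat.card_unique]
      have : (1:ℝ) ≤ Cfin C c * K ^ Cfin C c * A.ncard := by nlinarith
      exact_mod_cast this
    · calc (X.ncard : ℝ) ≤ C * K ^ C := hXcard
        _ ≤ Cfin C c * K ^ Cfin C c := by nlinarith
    · apply hcover.trans
      apply Set.add_subset_add_left
      apply Set.image_mono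
      intro n _
      show Real.sqrt (∑ i : Fin 0, ((1 : Matrix (Fin 0) (Fin 0) ℝ).mulVec
        (fun j => (n j : ℝ)) i) ^ 2) ≤ 1
      simp
  · -- main case
    obtain ⟨γ, F, hγdet, hSfin, hScard, hFfin, hFcard, hPsub⟩ :=
      key hc hMil hd B hBconv hBint hBsym hfin
    refine ⟨d, γ, a₀, a, X + (fun n : Fin d → ℤ => ∑ i, n i • a i) '' F, ?_, hγdet, ?_, ?_, ?_, ?_, ?_⟩
    · calc (d:ℝ) ≤ C * Real.log (2*K) := hdlog
        _ ≤ Cfin C c * Real.log (2*K) := mul_le_mul_of_nonneg_right hCfin2 hlog2K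
    · rw [sqrt_set_eq]; exact hSfin
    · rw [sqrt_set_eq]
      calc ((latt d (Es γ 1)).ncard : ℝ) ≤ (5*c)^d * (latt d B).ncard := hScard
        _ ≤ (5*c)^d * (C * K ^ C * A.ncard) := by
            apply mul_le_mul_of_nonneg_left hcount h5cd0
        _ = ((5*c)^d * (C * K ^ C)) * A.ncard := by ring
        _ ≤ (Cfin C c * K ^ Cfin C c) * A.ncard :=
            mul_le_mul_of_nonneg_right hprod (by positivity)
        _ = Cfin C c * K ^ Cfin C c * A.ncard := by ring
    · exact hXfin.add (hFfin.image _)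
    · have h1 : ((X + (fun n : Fin d → ℤ => ∑ i, n i • a i) '' F).ncard : ℝ) ≤
          (X.ncard : ℝ) * ((fun n : Fin d → ℤ => ∑ i, n i • a i) '' F).ncard := by
        exact_mod_cast ncard_add_le hXfin (hFfin.image _)
      have h2 : (((fun n : Fin d → ℤ => ∑ i, n i • a i) '' F).ncard : ℝ) ≤ (F.ncard : ℝ) := by
        exact_mod_cast Set.ncard_image_le hFfin
      calc ((X + (fun n : Fin d → ℤ => ∑ i, n i • a i) '' F).ncard : ℝ)
          ≤ (X.ncard : ℝ) * F.ncard := by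
            apply h1.trans
            apply mul_le_mul_of_nonneg_left h2 (by positivity)
        _ ≤ (C * K ^ C) * (5*c)^d := by
            apply mul_le_mul hXcard hFcard (by positivity) (by positivity)
        _ = (5*c)^d * (C * K ^ C) := by ring
        _ ≤ Cfin C c * K ^ Cfin C c := hprod
    · rw [sqrt_set_eq]
      apply hcover.trans
      intro x hx
      obtain ⟨x₁, hx₁, y, hy, rfl⟩ := hx
      obtain ⟨p, hp, rfl⟩ := hy
      have hp' : p ∈ F + latt d (Es γ 1) := hPsub hp
      obtain ⟨f, hf, s, hs, rfl⟩ := hp'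
      refine ⟨x₁ + ∑ i, f i • a i, Set.add_mem_add hx₁ ⟨f, hf, rfl⟩,
        a₀ + ∑ i, s i • a i, ⟨s, hs, rfl⟩, ?_⟩
      have hsum : ∑ i, (f + s) i • a i = (∑ i, f i • a i) + ∑ i, s i • a i := by
        rw [← Finset.sum_add_distrib]
        apply Finset.sum_congr rfl
        intro i _
        simp [add_smul]
      show x₁ + (∑ i, f i • a i) + (a₀ + ∑ i, s i • a i) = x₁ + (a₀ + ∑ i, (f + s) i • a i)
      rw [hsum]
      abel

end PFRAux

theorem stmt_13
    (hconv : ∃ C : ℝ, 1 ≤ C ∧ (∀ m : ℕ, ConvexPFR C (Fin m → ℝ)) ∧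
      (∀ m : ℕ, ConvexPFR C (Fin m → ℤ)))
    (hMilman : ∃ c : ℝ, 1 ≤ c ∧ MilmanRBM c) :
    ∃ C : ℝ, 1 ≤ C ∧ (∀ m : ℕ, EllipsoidPFR C (Fin m → ℝ)) ∧
      (∀ m : ℕ, EllipsoidPFR C (Fin m → ℤ)) := by
  obtain ⟨C, hC, hR, hZ⟩ := hconv
  obtain ⟨c, hc, hM⟩ := hMilman
  exact ⟨PFRAux.Cfin C c, (PFRAux.Cfin_props hC hc).1,
    fun m => PFRAux.main hC hc (hR m) hM, fun m => PFRAux.main hC hc (hZ m) hM⟩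
end
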